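/- arXiv:2509.14021 — 5 statements merged into one kernel-verified Lean document; each statement's English description precedes it below -/
import Mathlib

section
/- Let X be a real random variable with finite differential entropy, Z a standard Gaussian independent of X, and t₀ > 0 with h(X + √t₀ Z) < ∞. Then the conditional differential entropies h(X + √t₀ Z | |X| ≤ n) converge to h(X + √t₀ Z) as n → ∞. -/
open MeasureTheory ProbabilityTheory Real
open scoped ENNReal NNReal Classical

/-- Differential entropy of a density `f`: `-∫ f log f`, as an extended real.
If neither part is finite, the convention `⊤ - ⊤ = ⊥` applies, matching the
convention that the entropy is `-∞` when the integral does not exist. -/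
noncomputable def dEntFun (f : ℝ → ℝ) : EReal :=
  ((∫⁻ x, ENNReal.ofReal (-(f x * Real.log (f x)))) : ℝ≥0∞)
    - ((∫⁻ x, ENNReal.ofReal (f x * Real.log (f x))) : ℝ≥0∞)

/-- `f` is a density of the real random variable `X` under `P`. -/
def IsDensityOf {Ω : Type*} [MeasurableSpace Ω] (P : Measure Ω) (X : Ω → ℝ) (f : ℝ → ℝ) :
    Prop :=
  Measurable f ∧ (∀ x, 0 ≤ f x) ∧
    Measure.map X P = volume.withDensity fun x => ENNReal.ofReal (f x)

/-- Differential entropy of `X` under `P`; `⊥` if `X` has no density. -/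
noncomputable def dEnt {Ω : Type*} [MeasurableSpace Ω] (P : Measure Ω) (X : Ω → ℝ) : EReal :=
  if h : ∃ f, IsDensityOf P X f then dEntFun h.choose else ⊥

/-- The differential entropy exists and is finite. -/
def FinEnt {Ω : Type*} [MeasurableSpace Ω] (P : Measure Ω) (X : Ω → ℝ) : Prop :=
  dEnt P X ≠ ⊤ ∧ dEnt P X ≠ ⊥

/-! ### Auxiliary lemmas -/

section Aux

lemma conv_density (ρ : Measure ℝ) [SFinite ρ] (v : ℝ≥0) (hv : v ≠ 0) :
    Measure.map (fun p : ℝ × ℝ => p.1 + p.2) (ρ.prod (gaussianReal 0 v))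
      = volume.withDensity
          (fun y => ∫⁻ x, ENNReal.ofReal (gaussianPDFReal 0 v (y - x)) ∂ρ) := by
  have hk : Measurable fun q : ℝ × ℝ => ENNReal.ofReal (gaussianPDFReal 0 v (q.1 - q.2)) :=
    ((measurable_gaussianPDFReal 0 v).comp (measurable_fst.sub measurable_snd)).ennreal_ofReal
  ext s hs
  rw [Measure.map_apply measurable_add hs,
    Measure.prod_apply (measurable_add hs)]
  have h1 : ∀ x : ℝ, (gaussianReal 0 v) (Prod.mk x ⁻¹' ((fun p : ℝ × ℝ => p.1 + p.2) ⁻¹' s))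
      = ∫⁻ y, s.indicator (fun y => ENNReal.ofReal (gaussianPDFReal 0 v (y - x))) y := by
    intro x
    have hset : Prod.mk x ⁻¹' ((fun p : ℝ × ℝ => p.1 + p.2) ⁻¹' s) = (fun z : ℝ => x + z) ⁻¹' s := rfl
    have hms : MeasurableSet ((fun z : ℝ => x + z) ⁻¹' s) := (measurable_const_add x) hs
    rw [hset, gaussianReal_of_var_ne_zero _ hv, withDensity_apply _ hms]
    have heq : ∀ z : ℝ, s.indicator (fun y => ENNReal.ofReal (gaussianPDFReal 0 v (y - x))) (x + z)
        = ((fun z : ℝ => x + z) ⁻¹' s).indicator (gaussianPDF 0 v) z := by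
      intro z
      by_cases hz : x + z ∈ s
      · rw [Set.indicator_of_mem hz, Set.indicator_of_mem (show z ∈ (fun z : ℝ => x + z) ⁻¹' s from hz)]
        simp [gaussianPDF]
      · rw [Set.indicator_of_notMem hz, Set.indicator_of_notMem (show z ∉ (fun z : ℝ => x + z) ⁻¹' s from hz)]
    calc ∫⁻ z in (fun z : ℝ => x + z) ⁻¹' s, gaussianPDF 0 v z
        = ∫⁻ z, ((fun z : ℝ => x + z) ⁻¹' s).indicator (gaussianPDF 0 v) z := by
          rw [lintegral_indicator hms]
      _ = ∫⁻ z, s.indicator (fun y => ENNReal.ofReal (gaussianPDFReal 0 v (y - x))) (x + z) := by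
          simp_rw [heq]
      _ = ∫⁻ y, s.indicator (fun y => ENNReal.ofReal (gaussianPDFReal 0 v (y - x))) y :=
          lintegral_add_left_eq_self _ x
  simp_rw [h1]
  rw [lintegral_lintegral_swap]
  · rw [withDensity_apply _ hs, ← lintegral_indicator hs]
    congr 1
    ext y
    by_cases hy : y ∈ s
    · simp [Set.indicator_of_mem hy]
    · simp [Set.indicator_of_notMem hy]
  · have : (Function.uncurry fun x => s.indicator fun y => ENNReal.ofReal (gaussianPDFReal 0 v (y - x)))
        = (Set.univ ×ˢ s).indicator (fun q : ℝ × ℝ => ENNReal.ofReal (gaussianPDFReal 0 v (q.2 - q.1))) := by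
      ext q
      by_cases hq : q.2 ∈ s
      · rw [Function.uncurry, Set.indicator_of_mem hq,
          Set.indicator_of_mem (by simp [hq] : q ∈ Set.univ ×ˢ s)]
      · rw [Function.uncurry, Set.indicator_of_notMem hq,
          Set.indicator_of_notMem (by simp [hq] : q ∉ Set.univ ×ˢ s)]
    rw [this]
    exact (((measurable_gaussianPDFReal 0 v).comp
      (measurable_snd.sub measurable_fst)).ennreal_ofReal.indicator
      (MeasurableSet.univ.prod hs)).aemeasurable

lemma map_pair {Ω : Type*} [MeasurableSpace Ω] (P : Measure Ω)
    [IsProbabilityMeasure P] (X Z : Ω → ℝ) (hX : Measurable X) (hZ : Measurable Z)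
    (hindep : IndepFun X Z P) (hgauss : Measure.map Z P = gaussianReal 0 1) :
    Measure.map (fun ω => (X ω, Z ω)) P = (P.map X).prod (gaussianReal 0 1) := by
  rw [← hgauss]
  exact (indepFun_iff_map_prod_eq_prod_map_map hX.aemeasurable hZ.aemeasurable).mp hindep

lemma map_pair_restrict {Ω : Type*} [MeasurableSpace Ω] (P : Measure Ω)
    [IsProbabilityMeasure P] (X Z : Ω → ℝ) (hX : Measurable X) (hZ : Measurable Z)
    (hindep : IndepFun X Z P) (hgauss : Measure.map Z P = gaussianReal 0 1)
    {B : Set ℝ} (hB : MeasurableSet B) :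
    Measure.map (fun ω => (X ω, Z ω)) (P.restrict (X ⁻¹' B))
      = ((P.map X).restrict B).prod (gaussianReal 0 1) := by
  have hset : X ⁻¹' B = (fun ω => (X ω, Z ω)) ⁻¹' (B ×ˢ Set.univ) := by
    ext ω; simp
  rw [hset, ← Measure.restrict_map (hX.prodMk hZ) (hB.prod MeasurableSet.univ),
    map_pair P X Z hX hZ hindep hgauss, ← Measure.restrict_prod_eq_prod_univ]

lemma map_add_sqrt {Ω : Type*} [MeasurableSpace Ω] (X Z : Ω → ℝ)
    (hX : Measurable X) (hZ : Measurable Z) (t₀ : ℝ) (ht₀ : 0 < t₀)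
    (Q : Measure Ω) (ρ : Measure ℝ) [SFinite ρ]
    (hQ : Measure.map (fun ω => (X ω, Z ω)) Q = ρ.prod (gaussianReal 0 1)) :
    Measure.map (fun ω => X ω + Real.sqrt t₀ * Z ω) Q
      = Measure.map (fun p : ℝ × ℝ => p.1 + p.2) (ρ.prod (gaussianReal 0 ⟨t₀, ht₀.le⟩)) := by
  have h1 : (fun ω => X ω + Real.sqrt t₀ * Z ω)
      = ((fun p : ℝ × ℝ => p.1 + p.2) ∘ (Prod.map id (fun z => Real.sqrt t₀ * z)))
        ∘ (fun ω => (X ω, Z ω)) := rfl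
  have hm2 : Measurable (Prod.map (id : ℝ → ℝ) (fun z => Real.sqrt t₀ * z)) :=
    measurable_id.prodMap (measurable_const_mul _)
  rw [h1, ← Measure.map_map (measurable_add.comp hm2) (hX.prodMk hZ), hQ,
    ← Measure.map_map measurable_add hm2,
    ← Measure.map_prod_map _ _ measurable_id (measurable_const_mul _),
    Measure.map_id, gaussianReal_map_const_mul]
  congr 2
  ext : 1
  simp [Real.sq_sqrt ht₀.le]
  rfl

/-! Entropy computation lemmas -/

lemma enn_norm_eq (r : ℝ) : (‖r‖₊ : ℝ≥0∞) = ENNReal.ofReal r + ENNReal.ofReal (-r) := by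
  rw [← enorm_eq_nnnorm, Real.enorm_eq_ofReal_abs]
  rcases le_total 0 r with h | h
  · rw [abs_of_nonneg h, ENNReal.ofReal_of_nonpos (neg_nonpos.mpr h), add_zero]
  · rw [abs_of_nonpos h, ENNReal.ofReal_of_nonpos h, zero_add]

lemma integrable_of_parts {h : ℝ → ℝ} (hm : Measurable h)
    (h1 : (∫⁻ x, ENNReal.ofReal (h x)) ≠ ⊤) (h2 : (∫⁻ x, ENNReal.ofReal (-h x)) ≠ ⊤) :
    Integrable h := by
  refine ⟨hm.aestronglyMeasurable, ?_⟩
  show (∫⁻ x, (‖h x‖₊ : ℝ≥0∞)) < ⊤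
  calc ∫⁻ x, (‖h x‖₊ : ℝ≥0∞) = ∫⁻ x, (ENNReal.ofReal (h x) + ENNReal.ofReal (-h x)) := by
        simp_rw [enn_norm_eq]
    _ = (∫⁻ x, ENNReal.ofReal (h x)) + ∫⁻ x, ENNReal.ofReal (-h x) :=
        lintegral_add_left hm.ennreal_ofReal _
    _ < ⊤ := by
        rw [ENNReal.add_lt_top]
        exact ⟨h1.lt_top, h2.lt_top⟩

lemma integrable_of_nonneg {h : ℝ → ℝ} (hm : Measurable h) (h0 : ∀ x, 0 ≤ h x)
    (h1 : (∫⁻ x, ENNReal.ofReal (h x)) ≠ ⊤) : Integrable h := by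
  refine integrable_of_parts hm h1 ?_
  have : ∀ x, ENNReal.ofReal (-h x) = 0 := fun x =>
    ENNReal.ofReal_of_nonpos (neg_nonpos.mpr (h0 x))
  simp only [this, lintegral_const, zero_mul]
  exact ENNReal.zero_ne_top

lemma ofReal_eq_ofReal_max (r : ℝ) : ENNReal.ofReal r = ENNReal.ofReal (max r 0) := by
  rcases le_total 0 r with h | h
  · rw [max_eq_left h]
  · rw [max_eq_right h, ENNReal.ofReal_of_nonpos h, ENNReal.ofReal_zero]

lemma lintegral_ofReal_integrable {h : ℝ → ℝ} (hi : Integrable h) :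
    (∫⁻ x, ENNReal.ofReal (h x)) = ENNReal.ofReal (∫ x, max (h x) 0) := by
  rw [ofReal_integral_eq_lintegral_ofReal (hi.pos_part) (Filter.Eventually.of_forall fun x => le_max_right _ _)]
  exact lintegral_congr fun x => ofReal_eq_ofReal_max _

lemma dEntFun_eq_integral {f : ℝ → ℝ}
    (hint : Integrable (fun x => f x * Real.log (f x))) :
    dEntFun f = ((∫ x, -(f x * Real.log (f x)) : ℝ) : EReal) := by
  have h1 := lintegral_ofReal_integrable hint.neg
  have h2 := lintegral_ofReal_integrable hint
  simp only [Pi.neg_apply] at h1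
  rw [dEntFun, h1, h2]
  have hA : 0 ≤ ∫ x, max (-(f x * Real.log (f x))) 0 :=
    integral_nonneg fun x => le_max_right _ _
  have hB : 0 ≤ ∫ x, max (f x * Real.log (f x)) 0 :=
    integral_nonneg fun x => le_max_right _ _
  have hintneg : Integrable (fun x => max (-(f x * Real.log (f x))) 0) := by
    simpa using hint.neg.pos_part
  have key : (∫ x, -(f x * Real.log (f x)))
      = (∫ x, max (-(f x * Real.log (f x))) 0) - ∫ x, max (f x * Real.log (f x)) 0 := by
    rw [← integral_sub hintneg hint.pos_part]
    refine integral_congr_ae (Filter.Eventually.of_forall fun x => ?_)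
    show -(f x * Real.log (f x)) = max (-(f x * Real.log (f x))) 0 - max (f x * Real.log (f x)) 0
    rcases le_total 0 (f x * Real.log (f x)) with h | h
    · rw [max_eq_right (by linarith), max_eq_left h]; ring
    · rw [max_eq_left (by linarith), max_eq_right h]; ring
  rw [key, EReal.coe_sub]
  congr 1
  · rw [EReal.coe_ennreal_ofReal, max_eq_left hA]
  · rw [EReal.coe_ennreal_ofReal, max_eq_left hB]

lemma dEntFun_congr {f g : ℝ → ℝ} (hfg : f =ᵐ[volume] g) : dEntFun f = dEntFun g := by
  rw [dEntFun, dEntFun]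
  have h1 : (∫⁻ x, ENNReal.ofReal (-(f x * Real.log (f x))))
      = ∫⁻ x, ENNReal.ofReal (-(g x * Real.log (g x))) :=
    lintegral_congr_ae (hfg.mono fun x hx => by simp only [hx])
  have h2 : (∫⁻ x, ENNReal.ofReal (f x * Real.log (f x)))
      = ∫⁻ x, ENNReal.ofReal (g x * Real.log (g x)) :=
    lintegral_congr_ae (hfg.mono fun x hx => by simp only [hx])
  rw [h1, h2]

lemma dEnt_eq_dEntFun {Ω : Type*} [MeasurableSpace Ω] (P : Measure Ω) (Y : Ω → ℝ)
    {f : ℝ → ℝ} (hf : IsDensityOf P Y f) : dEnt P Y = dEntFun f := by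
  have hex : ∃ g, IsDensityOf P Y g := ⟨f, hf⟩
  rw [dEnt, dif_pos hex]
  obtain ⟨hgm, hgnn, hgd⟩ := hex.choose_spec
  obtain ⟨hfm, hfnn, hfd⟩ := hf
  have : (fun x => ENNReal.ofReal (hex.choose x)) =ᵐ[volume] fun x => ENNReal.ofReal (f x) := by
    rw [← withDensity_eq_iff_of_sigmaFinite hgm.ennreal_ofReal.aemeasurable
      hfm.ennreal_ofReal.aemeasurable, ← hgd, ← hfd]
  refine dEntFun_congr (this.mono fun x hx => ?_)
  simpa [ENNReal.ofReal_eq_ofReal_iff (hgnn x) (hfnn x)] using hx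

/-! Density of the convolution -/

noncomputable def convDen (v : ℝ≥0) (ρ : Measure ℝ) : ℝ → ℝ :=
  fun y => (∫⁻ x, ENNReal.ofReal (gaussianPDFReal 0 v (y - x)) ∂ρ).toReal

lemma gaussianPDFReal_le (v : ℝ≥0) (x : ℝ) :
    gaussianPDFReal 0 v x ≤ (Real.sqrt (2 * π * v))⁻¹ := by
  rw [gaussianPDFReal]
  have h1 : Real.exp (-(x - 0) ^ 2 / (2 * v)) ≤ 1 := by
    rw [Real.exp_le_one_iff]
    apply div_nonpos_of_nonpos_of_nonneg
    · simp [sq_nonneg]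
    · positivity
  calc (Real.sqrt (2 * π * v))⁻¹ * Real.exp (-(x - 0) ^ 2 / (2 * ↑v))
      ≤ (Real.sqrt (2 * π * v))⁻¹ * 1 := by
        apply mul_le_mul_of_nonneg_left h1 (by positivity)
    _ = (Real.sqrt (2 * π * v))⁻¹ := mul_one _

lemma lintegral_conv_le (v : ℝ≥0) (ρ : Measure ℝ) (y : ℝ) :
    (∫⁻ x, ENNReal.ofReal (gaussianPDFReal 0 v (y - x)) ∂ρ)
      ≤ ENNReal.ofReal ((Real.sqrt (2 * π * v))⁻¹) * ρ Set.univ := by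
  calc (∫⁻ x, ENNReal.ofReal (gaussianPDFReal 0 v (y - x)) ∂ρ)
      ≤ ∫⁻ _, ENNReal.ofReal ((Real.sqrt (2 * π * v))⁻¹) ∂ρ :=
        lintegral_mono fun x => ENNReal.ofReal_le_ofReal (gaussianPDFReal_le v _)
    _ = ENNReal.ofReal ((Real.sqrt (2 * π * v))⁻¹) * ρ Set.univ := by
        rw [lintegral_const]

lemma lintegral_conv_ne_top (v : ℝ≥0) (ρ : Measure ℝ) [IsFiniteMeasure ρ] (y : ℝ) :
    (∫⁻ x, ENNReal.ofReal (gaussianPDFReal 0 v (y - x)) ∂ρ) ≠ ⊤ :=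
  ((lintegral_conv_le v ρ y).trans_lt
    (ENNReal.mul_lt_top ENNReal.ofReal_lt_top (measure_lt_top ρ _))).ne

lemma ofReal_convDen (v : ℝ≥0) (ρ : Measure ℝ) [IsFiniteMeasure ρ] (y : ℝ) :
    ENNReal.ofReal (convDen v ρ y) = ∫⁻ x, ENNReal.ofReal (gaussianPDFReal 0 v (y - x)) ∂ρ :=
  ENNReal.ofReal_toReal (lintegral_conv_ne_top v ρ y)

lemma measurable_convDen (v : ℝ≥0) (ρ : Measure ℝ) [SFinite ρ] :
    Measurable (convDen v ρ) := by
  apply Measurable.ennreal_toReal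
  exact Measurable.lintegral_prod_right
    (((measurable_gaussianPDFReal 0 v).comp (measurable_fst.sub measurable_snd)).ennreal_ofReal)

lemma convDen_nonneg (v : ℝ≥0) (ρ : Measure ℝ) (y : ℝ) : 0 ≤ convDen v ρ y :=
  ENNReal.toReal_nonneg

lemma convDen_le (v : ℝ≥0) (ρ : Measure ℝ) [IsFiniteMeasure ρ] (hρ : ρ Set.univ ≤ 1) (y : ℝ) :
    convDen v ρ y ≤ (Real.sqrt (2 * π * v))⁻¹ := by
  rw [convDen]
  have := (lintegral_conv_le v ρ y).trans
    (by
      calc ENNReal.ofReal ((Real.sqrt (2 * π * v))⁻¹) * ρ Set.univ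
          ≤ ENNReal.ofReal ((Real.sqrt (2 * π * v))⁻¹) * 1 :=
            mul_le_mul_right hρ _
        _ = ENNReal.ofReal ((Real.sqrt (2 * π * v))⁻¹) := mul_one _)
  calc (∫⁻ x, ENNReal.ofReal (gaussianPDFReal 0 v (y - x)) ∂ρ).toReal
      ≤ (ENNReal.ofReal ((Real.sqrt (2 * π * v))⁻¹)).toReal :=
        ENNReal.toReal_mono ENNReal.ofReal_ne_top this
    _ = (Real.sqrt (2 * π * v))⁻¹ := ENNReal.toReal_ofReal (by positivity)

/-! Pointwise entropy bounds -/

lemma negMulLog_monoOn : MonotoneOn Real.negMulLog (Set.Icc 0 (Real.exp (-1))) := by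
  apply monotoneOn_of_deriv_nonneg (convex_Icc _ _)
    (Real.continuous_negMulLog.continuousOn)
  · intro x hx
    rw [interior_Icc] at hx
    exact (Real.differentiableAt_negMulLog hx.1.ne').differentiableWithinAt
  · intro x hx
    rw [interior_Icc] at hx
    rw [deriv_negMulLog hx.1.ne']
    have : Real.log x ≤ -1 := by
      rw [← Real.log_exp (-1)]
      exact Real.log_le_log hx.1 hx.2.le
    linarith

lemma mul_log_le_of_le {M t : ℝ} (ht0 : 0 ≤ t) (htM : t ≤ M) :
    t * Real.log t ≤ t * max (Real.log M) 0 := by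
  rcases le_total t 1 with h | h
  · have h1 : t * Real.log t ≤ 0 := mul_log_nonpos ht0 h
    have h2 : 0 ≤ t * max (Real.log M) 0 := mul_nonneg ht0 (le_max_right _ _)
    linarith
  · have hlog : Real.log t ≤ max (Real.log M) 0 :=
      le_max_of_le_left (Real.log_le_log (by linarith) htM)
    exact mul_le_mul_of_nonneg_left hlog (by linarith)

lemma abs_mul_log_le {t T : ℝ} (h0 : 0 ≤ t) (hT : t ≤ T) :
    |t * Real.log t| ≤ 1 + T * max (Real.log T) 0 := by
  have hT0 : 0 ≤ T := le_trans h0 hT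
  have hTK : 0 ≤ T * max (Real.log T) 0 := mul_nonneg hT0 (le_max_right _ _)
  rcases eq_or_lt_of_le h0 with h | h
  · rw [← h]
    simp only [zero_mul, abs_zero]
    linarith
  rcases le_total t 1 with h1 | h1
  · have h2 := Real.abs_log_mul_self_lt t h h1
    rw [mul_comm]
    linarith [h2.le]
  · have hlog : 0 ≤ Real.log t := Real.log_nonneg h1
    have he : |t * Real.log t| = t * Real.log t := abs_of_nonneg (mul_nonneg (by linarith) hlog)
    rw [he]
    have h3 : t * Real.log t ≤ t * max (Real.log T) 0 := mul_log_le_of_le (by linarith) hT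
    have h4 : t * max (Real.log T) 0 ≤ T * max (Real.log T) 0 :=
      mul_le_mul_of_nonneg_right hT (le_max_right _ _)
    linarith

/-- The key pointwise domination. -/
lemma u_pointwise_bound {Fv s M : ℝ} (hM : 0 < M) (hF0 : 0 ≤ Fv) (hFM : Fv ≤ M)
    (hs0 : 0 ≤ s) (hs : s ≤ 2 * Fv) :
    |(-(s * Real.log s))| ≤ 2 * max (Real.negMulLog Fv) 0 + 2 * Fv
      + (if Real.exp (-1) / 2 < Fv then 1 + 2 * M * max (Real.log (2 * M)) 0 else 0) := by
  have hnn1 : 0 ≤ max (Real.negMulLog Fv) 0 := le_max_right _ _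
  rw [abs_neg]
  rcases le_or_gt Fv (Real.exp (-1) / 2) with hc | hc
  · have hse : s ≤ Real.exp (-1) := by linarith
    have h2F : 2 * Fv ≤ Real.exp (-1) := by linarith
    have habs : |s * Real.log s| = Real.negMulLog s := by
      rw [Real.negMulLog, neg_mul, ← abs_neg, neg_mul_eq_neg_mul]
      refine abs_of_nonneg ?_
      have := Real.negMulLog_nonneg hs0 (le_trans hse (by
        calc Real.exp (-1) ≤ Real.exp 0 := Real.exp_le_exp.mpr (by norm_num)
          _ = 1 := Real.exp_zero))
      simpa [Real.negMulLog, neg_mul] using this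
    rw [habs]
    have hmono : Real.negMulLog s ≤ Real.negMulLog (2 * Fv) :=
      negMulLog_monoOn ⟨hs0, hse⟩ ⟨by linarith, h2F⟩ hs
    have hdecomp : Real.negMulLog (2 * Fv) = Fv * Real.negMulLog 2 + 2 * Real.negMulLog Fv :=
      Real.negMulLog_mul 2 Fv
    have hneg2 : Real.negMulLog 2 ≤ 0 := by
      rw [Real.negMulLog]
      have : 0 ≤ Real.log 2 := Real.log_nonneg (by norm_num)
      nlinarith
    have : Real.negMulLog (2 * Fv) ≤ 2 * max (Real.negMulLog Fv) 0 := by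
      have h1 : Fv * Real.negMulLog 2 ≤ 0 := mul_nonpos_of_nonneg_of_nonpos hF0 hneg2
      have h2 : Real.negMulLog Fv ≤ max (Real.negMulLog Fv) 0 := le_max_left _ _
      linarith
    rw [if_neg (not_lt.mpr hc)]
    linarith
  · rw [if_pos hc]
    have := abs_mul_log_le hs0 (le_trans hs (by linarith : 2 * Fv ≤ 2 * M))
    have hnnT : 0 ≤ 2 * M * max (Real.log (2*M)) 0 :=
      mul_nonneg (by linarith) (le_max_right _ _)
    linarith

end Aux

/-- Convergence of the conditional entropies `h(X + √t₀ Z | |X| ≤ n)` to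
`h(X + √t₀ Z)` as `n → ∞`. -/
theorem truncation_entropy_convergence {Ω : Type*} [MeasurableSpace Ω] (P : Measure Ω)
    [IsProbabilityMeasure P] (X Z : Ω → ℝ) (hX : Measurable X) (hZ : Measurable Z)
    (hindep : IndepFun X Z P) (hgauss : Measure.map Z P = gaussianReal 0 1)
    (hXfin : FinEnt P X) (t₀ : ℝ) (ht₀ : 0 < t₀)
    (hfin : dEnt P (fun ω => X ω + Real.sqrt t₀ * Z ω) ≠ ⊤) :
    Filter.Tendsto
      (fun n : ℕ => dEnt (P[|{ω | |X ω| ≤ (n : ℝ)}]) (fun ω => X ω + Real.sqrt t₀ * Z ω))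
      Filter.atTop (nhds (dEnt P (fun ω => X ω + Real.sqrt t₀ * Z ω))) := by
  classical
  set t' : ℝ≥0 := ⟨t₀, ht₀.le⟩ with ht'def
  have ht'0 : t' ≠ 0 := by
    intro h
    rw [ht'def] at h
    exact ht₀.ne' (congrArg NNReal.toReal h)
  set g : ℝ → ℝ := gaussianPDFReal 0 t' with hgdef
  set M : ℝ := (Real.sqrt (2 * π * t'))⁻¹ with hMdef
  have ht'pos : 0 < (t' : ℝ) := ht₀
  have hMpos : 0 < M := by
    rw [hMdef]
    have : 0 < Real.sqrt (2 * π * t') := Real.sqrt_pos.mpr (by positivity)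
    positivity
  set μ : Measure ℝ := P.map X with hμdef
  haveI hμprob : IsProbabilityMeasure μ := Measure.isProbabilityMeasure_map hX.aemeasurable
  set B : ℕ → Set ℝ := fun n => {x : ℝ | |x| ≤ (n : ℝ)} with hBdef
  have hBmeas : ∀ n, MeasurableSet (B n) := fun n =>
    (isClosed_le continuous_abs continuous_const).measurableSet
  set Y : Ω → ℝ := fun ω => X ω + Real.sqrt t₀ * Z ω with hYdef
  have hYmeas : Measurable Y := hX.add (measurable_const.mul hZ)
  -- map identities
  have hmapP : Measure.map Y P
      = volume.withDensity (fun y => ∫⁻ x, ENNReal.ofReal (g (y - x)) ∂μ) := by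
    rw [hYdef, map_add_sqrt X Z hX hZ t₀ ht₀ P μ
      (map_pair P X Z hX hZ hindep hgauss), conv_density μ t' ht'0]
  have hmapR : ∀ n, Measure.map Y (P.restrict (X ⁻¹' B n))
      = volume.withDensity (fun y => ∫⁻ x, ENNReal.ofReal (g (y - x)) ∂(μ.restrict (B n))) := by
    intro n
    rw [hYdef, map_add_sqrt X Z hX hZ t₀ ht₀ _ (μ.restrict (B n))
      (map_pair_restrict P X Z hX hZ hindep hgauss (hBmeas n)), conv_density _ t' ht'0]
  set F : ℝ → ℝ := convDen t' μ with hFdef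
  have hFmeas : Measurable F := measurable_convDen _ _
  have hFnonneg : ∀ y, 0 ≤ F y := convDen_nonneg _ _
  have hFle : ∀ y, F y ≤ M := fun y => convDen_le t' μ (le_of_eq measure_univ) y
  have hFdens : IsDensityOf P Y F := by
    refine ⟨hFmeas, hFnonneg, ?_⟩
    rw [hmapP]
    exact (withDensity_congr_ae
      (Filter.Eventually.of_forall fun y => ofReal_convDen t' μ y)).symm
  -- the truncated measures
  set c : ℕ → ℝ := fun n => (μ (B n)).toReal with hcdef
  have hBmono : Monotone B := by
    intro m n hmn x hx
    simp only [hBdef, Set.mem_setOf_eq] at hx ⊢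
    exact hx.trans (Nat.cast_le.mpr hmn)
  have hBunion : (⋃ n, B n) = Set.univ := by
    ext x
    simp only [Set.mem_iUnion, Set.mem_univ, iff_true, hBdef, Set.mem_setOf_eq]
    exact exists_nat_ge |x|
  have hμB : Filter.Tendsto (fun n => μ (B n)) Filter.atTop (nhds 1) := by
    have := tendsto_measure_iUnion_atTop (μ := μ) hBmono
    rwa [hBunion, measure_univ] at this
  have hcT : Filter.Tendsto c Filter.atTop (nhds 1) := by
    have h2 := (ENNReal.tendsto_toReal (ENNReal.one_ne_top)).comp hμB
    exact h2
  have hev : ∀ᶠ n in Filter.atTop, 1/2 ≤ c n :=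
    hcT.eventually (eventually_ge_nhds (by norm_num))
  -- lintegral of F is 1
  have hF1 : (∫⁻ y, ENNReal.ofReal (F y)) = 1 := by
    have h0 : (volume.withDensity fun y => ENNReal.ofReal (F y)) Set.univ = 1 := by
      rw [← hFdens.2.2, Measure.map_apply hYmeas MeasurableSet.univ]
      simp
    rwa [withDensity_apply _ MeasurableSet.univ, setLIntegral_univ] at h0
  have hFint : Integrable F := integrable_of_nonneg hFmeas hFnonneg (by rw [hF1]; exact ENNReal.one_ne_top)
  -- the negative part of the entropy of F is finite
  have hnegF : (∫⁻ y, ENNReal.ofReal (F y * Real.log (F y))) ≠ ⊤ := by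
    have hb : ∀ y, ENNReal.ofReal (F y * Real.log (F y))
        ≤ ENNReal.ofReal (F y) * ENNReal.ofReal (max (Real.log M) 0) := by
      intro y
      rw [← ENNReal.ofReal_mul (hFnonneg y)]
      exact ENNReal.ofReal_le_ofReal (mul_log_le_of_le (hFnonneg y) (hFle y))
    have : (∫⁻ y, ENNReal.ofReal (F y * Real.log (F y)))
        ≤ ENNReal.ofReal (max (Real.log M) 0) := by
      calc (∫⁻ y, ENNReal.ofReal (F y * Real.log (F y)))
          ≤ ∫⁻ y, ENNReal.ofReal (F y) * ENNReal.ofReal (max (Real.log M) 0) :=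
            lintegral_mono hb
        _ = (∫⁻ y, ENNReal.ofReal (F y)) * ENNReal.ofReal (max (Real.log M) 0) :=
            lintegral_mul_const _ hFmeas.ennreal_ofReal
        _ = ENNReal.ofReal (max (Real.log M) 0) := by rw [hF1, one_mul]
    exact (this.trans_lt ENNReal.ofReal_lt_top).ne
  have hEnt1 : dEnt P Y = dEntFun F := dEnt_eq_dEntFun P Y hFdens
  -- the positive part is finite thanks to `hfin`
  have hposF : (∫⁻ y, ENNReal.ofReal (-(F y * Real.log (F y)))) ≠ ⊤ := by
    intro htop
    apply hfin
    rw [hEnt1, dEntFun, htop, EReal.coe_ennreal_top]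
    have hne : ((((∫⁻ x, ENNReal.ofReal (F x * Real.log (F x))) : ℝ≥0∞)) : EReal) ≠ ⊥ := by
      simp
    rw [← ENNReal.ofReal_toReal hnegF, EReal.coe_ennreal_ofReal, sub_eq_add_neg]
    rw [max_eq_left ENNReal.toReal_nonneg]
    exact EReal.top_add_of_ne_bot (by simp)
  have hFlogint : Integrable (fun y => F y * Real.log (F y)) :=
    integrable_of_parts (hFmeas.mul (Real.measurable_log.comp hFmeas)) hnegF hposF
  have hEntPval : dEnt P Y = ((∫ y, -(F y * Real.log (F y)) : ℝ) : EReal) :=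
    hEnt1.trans (dEntFun_eq_integral hFlogint)
  -- truncated densities
  set Fn : ℕ → ℝ → ℝ := fun n => convDen t' (μ.restrict (B n)) with hFndef
  have hFnmeas : ∀ n, Measurable (Fn n) := fun n => measurable_convDen _ _
  have hFnnn : ∀ n y, 0 ≤ Fn n y := fun n y => convDen_nonneg _ _ _
  have hFnle : ∀ n y, Fn n y ≤ F y := by
    intro n y
    exact ENNReal.toReal_mono (lintegral_conv_ne_top _ _ _)
      (setLIntegral_le_lintegral _ _)
  -- remainder bound
  have hremainder : ∀ n y, F y - Fn n y ≤ M * (μ (B n)ᶜ).toReal := by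
    intro n y
    have hrle : (∫⁻ x in (B n)ᶜ, ENNReal.ofReal (g (y - x)) ∂μ)
        ≤ ENNReal.ofReal M * μ (B n)ᶜ := by
      have h2 := lintegral_conv_le t' (μ.restrict (B n)ᶜ) y
      rwa [Measure.restrict_apply_univ] at h2
    have hrtop : (∫⁻ x in (B n)ᶜ, ENNReal.ofReal (g (y - x)) ∂μ) ≠ ⊤ :=
      lintegral_conv_ne_top t' (μ.restrict (B n)ᶜ) y
    have hFy : F y = Fn n y + (∫⁻ x in (B n)ᶜ, ENNReal.ofReal (g (y - x)) ∂μ).toReal := by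
      show (∫⁻ x, ENNReal.ofReal (g (y - x)) ∂μ).toReal
        = (∫⁻ x in B n, ENNReal.ofReal (g (y - x)) ∂μ).toReal
          + (∫⁻ x in (B n)ᶜ, ENNReal.ofReal (g (y - x)) ∂μ).toReal
      rw [← lintegral_add_compl (fun x => ENNReal.ofReal (g (y - x))) (hBmeas n),
        ENNReal.toReal_add (lintegral_conv_ne_top t' (μ.restrict (B n)) y) hrtop]
    rw [hFy]
    have h3 : (∫⁻ x in (B n)ᶜ, ENNReal.ofReal (g (y - x)) ∂μ).toReal
        ≤ (ENNReal.ofReal M * μ (B n)ᶜ).toReal :=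
      ENNReal.toReal_mono
        (ENNReal.mul_ne_top ENNReal.ofReal_ne_top (measure_ne_top _ _)) hrle
    rw [ENNReal.toReal_mul, ENNReal.toReal_ofReal hMpos.le] at h3
    linarith
  have hcompl0 : Filter.Tendsto (fun n => (μ (B n)ᶜ).toReal) Filter.atTop (nhds 0) := by
    have heq : ∀ n, (μ (B n)ᶜ).toReal = 1 - c n := by
      intro n
      rw [measure_compl (hBmeas n) (measure_ne_top _ _), measure_univ,
        ENNReal.toReal_sub_of_le prob_le_one ENNReal.one_ne_top, ENNReal.toReal_one]
    simp only [heq]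
    have h5 := (tendsto_const_nhds (α := ℕ) (x := (1:ℝ))).sub hcT
    simpa using h5
  have hFnconv : ∀ y, Filter.Tendsto (fun n => Fn n y) Filter.atTop (nhds (F y)) := by
    intro y
    apply tendsto_of_tendsto_of_tendsto_of_le_of_le
      (g := fun n => F y - M * (μ (B n)ᶜ).toReal) (h := fun _ => F y)
    · have h6 := (tendsto_const_nhds (α := ℕ) (x := F y)).sub
        (hcompl0.const_mul M)
      simpa using h6
    · exact tendsto_const_nhds
    · intro n
      have := hremainder n y
      simp only
      linarith
    · intro n
      exact hFnle n y
  -- normalized truncated densities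
  set fn : ℕ → ℝ → ℝ := fun n y => (c n)⁻¹ * Fn n y with hfndef
  have hfnmeas : ∀ n, Measurable (fn n) := fun n => (hFnmeas n).const_mul _
  have hfnconv : ∀ y, Filter.Tendsto (fun n => fn n y) Filter.atTop (nhds (F y)) := by
    intro y
    have hinv : Filter.Tendsto (fun n => (c n)⁻¹) Filter.atTop (nhds 1) := by
      have := hcT.inv₀ one_ne_zero
      simpa using this
    have := hinv.mul (hFnconv y)
    simpa using this
  -- the dominating function
  set S : Set ℝ := {y | Real.exp (-1) / 2 < F y} with hSdef
  have hSmeas : MeasurableSet S := measurableSet_lt measurable_const hFmeas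
  have hSfin : volume S ≠ ⊤ := by
    intro htop
    have hεpos : (0:ℝ) < Real.exp (-1) / 2 := by positivity
    have hsub : S ⊆ {y | ENNReal.ofReal (Real.exp (-1) / 2) ≤ ENNReal.ofReal (F y)} := by
      intro y hy
      exact ENNReal.ofReal_le_ofReal (le_of_lt hy)
    have hmar := mul_meas_ge_le_lintegral (μ := volume) hFmeas.ennreal_ofReal
      (ENNReal.ofReal (Real.exp (-1) / 2))
    rw [hF1] at hmar
    have hS' : volume {y | ENNReal.ofReal (Real.exp (-1) / 2) ≤ ENNReal.ofReal (F y)} = ⊤ :=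
      top_le_iff.mp (htop ▸ measure_mono hsub)
    rw [hS', ENNReal.mul_top (by simp only [ne_eq, ENNReal.ofReal_eq_zero, not_le]; positivity)] at hmar
    exact (by simp : ¬ ((⊤:ℝ≥0∞) ≤ 1)) hmar
  set CT : ℝ := 1 + 2 * M * max (Real.log (2 * M)) 0 with hCTdef
  set G : ℝ → ℝ := fun y => 2 * max (Real.negMulLog (F y)) 0 + 2 * F y
      + S.indicator (fun _ => CT) y with hGdef
  have hI1 : Integrable (fun y => max (Real.negMulLog (F y)) 0) := by
    have heq : ∀ y, ENNReal.ofReal (max (Real.negMulLog (F y)) 0)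
        = ENNReal.ofReal (-(F y * Real.log (F y))) := by
      intro y
      rw [← ofReal_eq_ofReal_max, Real.negMulLog, neg_mul]
    refine integrable_of_nonneg
      ((Real.continuous_negMulLog.measurable.comp hFmeas).max measurable_const)
      (fun y => le_max_right _ _) ?_
    calc (∫⁻ x, ENNReal.ofReal (max (Real.negMulLog (F x)) 0))
        = ∫⁻ x, ENNReal.ofReal (-(F x * Real.log (F x))) := lintegral_congr heq
      _ ≠ ⊤ := hposF
  have hI3 : Integrable (S.indicator (fun _ => CT)) := by
    apply IntegrableOn.integrable_indicator _ hSmeas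
    exact integrableOn_const hSfin
  have hGint : Integrable G := by
    rw [hGdef]
    exact ((hI1.const_mul 2).add (hFint.const_mul 2)).add hI3
  -- domination
  have hGbound : ∀ n, 1/2 ≤ c n → ∀ y, |(-(fn n y * Real.log (fn n y)))| ≤ G y := by
    intro n hn y
    have hcpos : 0 < c n := by linarith
    have hinvle : (c n)⁻¹ ≤ 2 := by
      rw [inv_le_comm₀ hcpos (by norm_num)]
      linarith
    have hfnnn : 0 ≤ fn n y := mul_nonneg (inv_nonneg.mpr hcpos.le) (hFnnn n y)
    have hfnle : fn n y ≤ 2 * F y := by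
      calc fn n y = (c n)⁻¹ * Fn n y := rfl
        _ ≤ 2 * F y :=
          mul_le_mul hinvle (hFnle n y) (hFnnn n y) (by norm_num)
    have := u_pointwise_bound hMpos (hFnonneg y) (hFle y) hfnnn hfnle
    rw [hGdef]
    simp only [Set.indicator_apply, hSdef, Set.mem_setOf_eq, hCTdef]
    convert this using 2
  -- integrability of truncated entropies
  have hfnint : ∀ n, 1/2 ≤ c n → Integrable (fun y => fn n y * Real.log (fn n y)) := by
    intro n hn
    apply Integrable.mono' hGint
      (((hfnmeas n).mul (Real.measurable_log.comp (hfnmeas n))).aestronglyMeasurable)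
    refine Filter.Eventually.of_forall fun y => ?_
    rw [Real.norm_eq_abs, ← abs_neg]
    exact hGbound n hn y
  -- dominated convergence
  have hDCT : Filter.Tendsto (fun n => ∫ y, -(fn n y * Real.log (fn n y)))
      Filter.atTop (nhds (∫ y, -(F y * Real.log (F y)))) := by
    apply tendsto_integral_filter_of_dominated_convergence G
    · exact Filter.Eventually.of_forall fun n =>
        (((hfnmeas n).mul (Real.measurable_log.comp (hfnmeas n))).neg).aestronglyMeasurable
    · filter_upwards [hev] with n hn
      refine Filter.Eventually.of_forall fun y => ?_
      rw [Real.norm_eq_abs]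
      exact hGbound n hn y
    · exact hGint
    · refine Filter.Eventually.of_forall fun y => ?_
      have := (Real.continuous_negMulLog.tendsto (F y)).comp (hfnconv y)
      simpa [Function.comp_def, Real.negMulLog_eq_neg] using this
  -- identification of the conditional entropies
  have hcond : ∀ n, 1/2 ≤ c n →
      dEnt (P[|{ω | |X ω| ≤ (n : ℝ)}]) Y
        = ((∫ y, -(fn n y * Real.log (fn n y)) : ℝ) : EReal) := by
    intro n hn
    have hcpos : 0 < c n := by linarith
    have hAeq : {ω | |X ω| ≤ (n : ℝ)} = X ⁻¹' B n := rfl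
    have hPA : P (X ⁻¹' B n) = μ (B n) := (Measure.map_apply hX (hBmeas n)).symm
    have hμBfin : μ (B n) ≠ ⊤ := measure_ne_top _ _
    have hμBne : μ (B n) ≠ 0 := by
      intro h0
      rw [hcdef] at hcpos
      simp only [h0, ENNReal.toReal_zero] at hcpos
      exact lt_irrefl _ hcpos
    have hofReal : ENNReal.ofReal (c n) = μ (B n) := ENNReal.ofReal_toReal hμBfin
    have hdens : IsDensityOf (P[|{ω | |X ω| ≤ (n : ℝ)}]) Y (fn n) := by
      refine ⟨hfnmeas n, fun y => mul_nonneg (inv_nonneg.mpr hcpos.le) (hFnnn n y), ?_⟩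
      have hcondm : P[|{ω | |X ω| ≤ (n : ℝ)}]
          = (P (X ⁻¹' B n))⁻¹ • P.restrict (X ⁻¹' B n) := rfl
      rw [hcondm, Measure.map_smul, hmapR n, hPA,
        ← withDensity_smul' _ _ (by simp [hμBne] : (μ (B n))⁻¹ ≠ ⊤)]
      congr 1
      funext y
      simp only [Pi.smul_apply, smul_eq_mul]
      rw [hfndef]
      simp only
      rw [ENNReal.ofReal_mul (inv_nonneg.mpr hcpos.le), ENNReal.ofReal_inv_of_pos hcpos,
        hofReal, ofReal_convDen]
    rw [dEnt_eq_dEntFun _ _ hdens, dEntFun_eq_integral (hfnint n hn)]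
  -- conclusion
  rw [hEntPval]
  have hfinal : Filter.Tendsto
      (fun n => ((∫ y, -(fn n y * Real.log (fn n y)) : ℝ) : EReal))
      Filter.atTop (nhds ((∫ y, -(F y * Real.log (F y)) : ℝ) : EReal)) :=
    EReal.tendsto_coe.mpr hDCT
  apply Filter.Tendsto.congr' _ hfinal
  filter_upwards [hev] with n hn
  exact (hcond n hn).symm
end

section
/- For any real random variable X and 0 < a < t₀, the relative entropy (Kullback–Leibler divergence) between the laws of X + √t₀ Z and X + √a Z is at most the relative entropy between N(0,t₀) and N(0,a), which is finite; here Z ~ N(0,1) is independent of X. -/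
open MeasureTheory ProbabilityTheory Real
open scoped ENNReal NNReal Classical

/-- Relative entropy (Kullback–Leibler divergence) between measures on `ℝ`. -/
noncomputable def relEnt (P Q : Measure ℝ) : EReal :=
  if P ≪ Q ∧ Integrable (fun x => Real.log (P.rnDeriv Q x).toReal) P then
    ((∫ x, Real.log (P.rnDeriv Q x).toReal ∂P : ℝ) : EReal)
  else ⊤


set_option maxHeartbeats 1000000
set_option linter.unusedSectionVars false

/-- likelihood ratio of N(0,t₀) over N(0,a) -/
noncomputable def lr (a t₀ w : ℝ) : ℝ :=
  Real.sqrt (a / t₀) * Real.exp ((a⁻¹ - t₀⁻¹) / 2 * w ^ 2)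

lemma lr_pos {a t₀ : ℝ} (ha : 0 < a) (hat₀ : a < t₀) (w : ℝ) : 0 < lr a t₀ w :=
  mul_pos (Real.sqrt_pos.2 (div_pos ha (ha.trans hat₀))) (Real.exp_pos _)

lemma beta_nonneg {a t₀ : ℝ} (ha : 0 < a) (hat₀ : a < t₀) : 0 ≤ (a⁻¹ - t₀⁻¹) / 2 := by
  have : t₀⁻¹ ≤ a⁻¹ := inv_anti₀ ha hat₀.le
  linarith

lemma sqrt_ratio_le_lr {a t₀ : ℝ} (ha : 0 < a) (hat₀ : a < t₀) (w : ℝ) :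
    Real.sqrt (a / t₀) ≤ lr a t₀ w := by
  have hβ : 0 ≤ (a⁻¹ - t₀⁻¹) / 2 * w ^ 2 :=
    mul_nonneg (beta_nonneg ha hat₀) (sq_nonneg w)
  nth_rewrite 1 [← mul_one (Real.sqrt (a / t₀))]
  exact mul_le_mul_of_nonneg_left (Real.one_le_exp hβ) (Real.sqrt_nonneg _)

lemma log_lr {a t₀ : ℝ} (ha : 0 < a) (hat₀ : a < t₀) (w : ℝ) :
    Real.log (lr a t₀ w) = Real.log (Real.sqrt (a / t₀)) + (a⁻¹ - t₀⁻¹) / 2 * w ^ 2 := by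
  have ht₀ : 0 < t₀ := ha.trans hat₀
  rw [lr, Real.log_mul (by positivity) (Real.exp_ne_zero _), Real.log_exp]

lemma pdf_ratio {a t₀ : ℝ} (ha : 0 < a) (hat₀ : a < t₀) (w : ℝ) :
    gaussianPDFReal 0 t₀.toNNReal w = lr a t₀ w * gaussianPDFReal 0 a.toNNReal w := by
  have ht₀ : 0 < t₀ := ha.trans hat₀
  rw [gaussianPDFReal, gaussianPDFReal, lr]
  simp only [Real.coe_toNNReal _ ht₀.le, Real.coe_toNNReal _ ha.le, sub_zero]
  rw [mul_mul_mul_comm, ← Real.exp_add]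
  congr 1
  · have h2 : Real.sqrt (2 * π * t₀) = Real.sqrt (2 * π) * Real.sqrt t₀ :=
      Real.sqrt_mul (by positivity) _
    have h3 : Real.sqrt (2 * π * a) = Real.sqrt (2 * π) * Real.sqrt a :=
      Real.sqrt_mul (by positivity) _
    have h4 : Real.sqrt (a / t₀) = Real.sqrt a / Real.sqrt t₀ := Real.sqrt_div ha.le _
    rw [h2, h3, h4]
    have : Real.sqrt (2 * π) ≠ 0 := by positivity
    have : Real.sqrt a ≠ 0 := by positivity
    have : Real.sqrt t₀ ≠ 0 := by positivity
    field_simp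
  · field_simp
    congr 1
    have := ha.ne'
    field_simp
    ring

noncomputable def convDens (μ : Measure ℝ) (t : ℝ) (x : ℝ) : ℝ≥0∞ :=
  ∫⁻ y, ENNReal.ofReal (gaussianPDFReal 0 t.toNNReal (x - y)) ∂μ

lemma measurable_convDens (μ : Measure ℝ) [SFinite μ] (t : ℝ) :
    Measurable (convDens μ t) := by
  apply Measurable.lintegral_prod_right
  exact ((measurable_gaussianPDFReal 0 t.toNNReal).comp measurable_sub).ennreal_ofReal

lemma convDens_le (μ : Measure ℝ) [IsProbabilityMeasure μ] (t : ℝ) (x : ℝ) :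
    convDens μ t x ≤ ENNReal.ofReal ((Real.sqrt (2 * π * t.toNNReal))⁻¹) := by
  calc convDens μ t x ≤ ∫⁻ _, ENNReal.ofReal ((Real.sqrt (2 * π * t.toNNReal))⁻¹) ∂μ :=
        lintegral_mono fun y => ENNReal.ofReal_le_ofReal (gaussianPDFReal_le _ _)
    _ = ENNReal.ofReal ((Real.sqrt (2 * π * t.toNNReal))⁻¹) := by simp

lemma convDens_lt_top (μ : Measure ℝ) [IsProbabilityMeasure μ] (t : ℝ) (x : ℝ) :
    convDens μ t x < ∞ :=
  lt_of_le_of_lt (convDens_le μ t x) ENNReal.ofReal_lt_top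

lemma convDens_pos (μ : Measure ℝ) [IsProbabilityMeasure μ] {t : ℝ} (ht : 0 < t) (x : ℝ) :
    0 < convDens μ t x := by
  rw [pos_iff_ne_zero]
  intro h
  have hm : Measurable fun y => ENNReal.ofReal (gaussianPDFReal 0 t.toNNReal (x - y)) :=
    Measurable.ennreal_ofReal ((measurable_gaussianPDFReal 0 t.toNNReal).comp
      (measurable_id.const_sub x))
  rw [convDens, lintegral_eq_zero_iff hm] at h
  have h2 : ∀ᵐ y ∂μ, False := by
    filter_upwards [h] with y hy
    have := gaussianPDFReal_pos 0 t.toNNReal (x - y) (by simp [ht, ht.le, ht.ne'])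
    simp only [Pi.zero_apply, ENNReal.ofReal_eq_zero] at hy
    linarith
  exact (IsProbabilityMeasure.ne_zero μ) (by simpa using h2)

lemma conv_eq_withDensity (μ : Measure ℝ) [IsProbabilityMeasure μ] {t : ℝ} (ht : 0 < t) :
    Measure.map (fun p : ℝ × ℝ => p.1 + p.2) (μ.prod (gaussianReal 0 t.toNNReal)) =
      volume.withDensity (convDens μ t) := by
  have ht' : t.toNNReal ≠ 0 := by simp [ht, ht.le, ht.ne']
  ext s hs
  rw [Measure.map_apply measurable_add hs, Measure.prod_apply (measurable_add hs),
    withDensity_apply _ hs]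
  have hpdf : Measurable (gaussianPDF 0 t.toNNReal) := measurable_gaussianPDF _ _
  set F : ℝ → ℝ → ℝ≥0∞ :=
    fun y x => s.indicator (fun _ => (1 : ℝ≥0∞)) x * gaussianPDF 0 t.toNNReal (x - y) with hF
  have hFmeas : Measurable (Function.uncurry F) := by
    apply Measurable.mul
    · exact (measurable_const.indicator hs).comp measurable_snd
    · exact hpdf.comp (measurable_snd.sub measurable_fst)
  calc ∫⁻ y, (gaussianReal 0 t.toNNReal) (Prod.mk y ⁻¹' ((fun p : ℝ × ℝ => p.1 + p.2) ⁻¹' s)) ∂μ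
      = ∫⁻ y, ∫⁻ x, F y x ∂volume ∂μ := by
        apply lintegral_congr fun y => ?_
        have hset : (Prod.mk y ⁻¹' ((fun p : ℝ × ℝ => p.1 + p.2) ⁻¹' s)) = (fun z => y + z) ⁻¹' s := rfl
        rw [hset, gaussianReal_of_var_ne_zero 0 ht',
          withDensity_apply _ (measurable_const_add y hs),
          ← lintegral_indicator (measurable_const_add y hs)]
        have key : ∫⁻ x, ((fun z => y + z) ⁻¹' s).indicator (gaussianPDF 0 t.toNNReal) x ∂volume
            = ∫⁻ x, ((fun z => y + z) ⁻¹' s).indicator (gaussianPDF 0 t.toNNReal) (x + -y) ∂volume := by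
          conv_lhs => rw [← map_add_right_eq_self volume (-y)]
          rw [lintegral_map (hpdf.indicator (measurable_const_add y hs))
            (measurable_add_const (-y))]
        rw [key]
        apply lintegral_congr fun x => ?_
        have hxy : y + (x + -y) = x := by ring
        simp only [hF, Set.indicator, Set.mem_preimage, hxy, sub_eq_add_neg]
        rcases Classical.em (x ∈ s) with hx | hx <;> simp [hx]
    _ = ∫⁻ x, ∫⁻ y, F y x ∂μ ∂volume := lintegral_lintegral_swap hFmeas.aemeasurable
    _ = ∫⁻ x in s, convDens μ t x ∂volume := by
        rw [← lintegral_indicator hs]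
        apply lintegral_congr fun x => ?_
        rw [hF]
        simp only []
        have hm : Measurable fun y : ℝ => gaussianPDF 0 t.toNNReal (x - y) :=
          hpdf.comp (measurable_id.const_sub x)
        rw [lintegral_const_mul _ hm]
        rcases Classical.em (x ∈ s) with hx | hx
        · simp only [Set.indicator_of_mem hx]
          rw [one_mul]
          rfl
        · simp [Set.indicator_of_notMem hx]

lemma sqrt_mul_gauss {Ω : Type*} [MeasurableSpace Ω] {P : Measure Ω}
    [IsProbabilityMeasure P] {Z : Ω → ℝ} (hZ : Measurable Z)
    (hgauss : Measure.map Z P = gaussianReal 0 1) {t : ℝ} (ht : 0 < t) :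
    Measure.map (fun ω => Real.sqrt t * Z ω) P = gaussianReal 0 t.toNNReal := by
  have : (fun ω => Real.sqrt t * Z ω) = (Real.sqrt t * ·) ∘ Z := rfl
  rw [this, ← Measure.map_map (measurable_const_mul _) hZ, hgauss,
    gaussianReal_map_const_mul, mul_zero]
  congr 1
  ext
  simp [Real.sq_sqrt ht.le, ht.le]

lemma map_add_sqrt_mul {Ω : Type*} [MeasurableSpace Ω] {P : Measure Ω}
    [IsProbabilityMeasure P] {X Z : Ω → ℝ} (hX : Measurable X) (hZ : Measurable Z)
    (hindep : IndepFun X Z P) (hgauss : Measure.map Z P = gaussianReal 0 1)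
    {t : ℝ} (ht : 0 < t) :
    Measure.map (fun ω => X ω + Real.sqrt t * Z ω) P =
      Measure.map (fun p : ℝ × ℝ => p.1 + p.2)
        ((Measure.map X P).prod (gaussianReal 0 t.toNNReal)) := by
  have hZt : Measurable fun ω => Real.sqrt t * Z ω := hZ.const_mul _
  have hindep' : IndepFun X (fun ω => Real.sqrt t * Z ω) P := by
    have := hindep.comp measurable_id (measurable_const_mul (Real.sqrt t))
    exact this
  have hmap : Measure.map (fun ω => (X ω, Real.sqrt t * Z ω)) P
      = (Measure.map X P).prod (Measure.map (fun ω => Real.sqrt t * Z ω) P) :=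
    (indepFun_iff_map_prod_eq_prod_map_map hX.aemeasurable hZt.aemeasurable).mp hindep'
  rw [← sqrt_mul_gauss hZ hgauss ht, ← hmap,
    Measure.map_map measurable_add (hX.prodMk hZt)]
  rfl

lemma measurable_lr (a t₀ : ℝ) : Measurable (lr a t₀) := by
  unfold lr; fun_prop

lemma gauss_eq_withDensity {a t₀ : ℝ} (ha : 0 < a) (hat₀ : a < t₀) :
    gaussianReal 0 t₀.toNNReal =
      (gaussianReal 0 a.toNNReal).withDensity (fun w => ENNReal.ofReal (lr a t₀ w)) := by
  have ht₀ : 0 < t₀ := ha.trans hat₀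
  rw [gaussianReal_of_var_ne_zero 0 (by simp [ha, ha.le, ha.ne'] : a.toNNReal ≠ 0),
    gaussianReal_of_var_ne_zero 0 (by simp [ht₀, ht₀.le, ht₀.ne'] : t₀.toNNReal ≠ 0),
    ← withDensity_mul _ (measurable_gaussianPDF _ _) (measurable_lr a t₀).ennreal_ofReal]
  congr 1
  ext w
  simp only [Pi.mul_apply, gaussianPDF]
  rw [pdf_ratio ha hat₀ w, mul_comm (lr a t₀ w) _,
    ENNReal.ofReal_mul (gaussianPDFReal_nonneg 0 a.toNNReal w)]

lemma gauss_ac {a t₀ : ℝ} (ha : 0 < a) (hat₀ : a < t₀) :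
    gaussianReal 0 t₀.toNNReal ≪ gaussianReal 0 a.toNNReal := by
  rw [gauss_eq_withDensity ha hat₀]
  exact withDensity_absolutelyContinuous _ _

lemma gauss_rnDeriv {a t₀ : ℝ} (ha : 0 < a) (hat₀ : a < t₀) :
    (gaussianReal 0 t₀.toNNReal).rnDeriv (gaussianReal 0 a.toNNReal)
      =ᵐ[gaussianReal 0 a.toNNReal] fun w => ENNReal.ofReal (lr a t₀ w) := by
  rw [gauss_eq_withDensity ha hat₀]
  exact Measure.rnDeriv_withDensity _ (measurable_lr a t₀).ennreal_ofReal

lemma integrable_sq_mul_exp_neg_mul_sq {b : ℝ} (hb : 0 < b) :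
    Integrable fun x : ℝ => x ^ 2 * Real.exp (-b * x ^ 2) := by
  apply Integrable.mono' ((integrable_exp_neg_mul_sq (half_pos hb)).const_mul (2 / b))
  · exact (Continuous.mul (by continuity) (by continuity)).aestronglyMeasurable
  · refine ae_of_all _ fun x => ?_
    rw [Real.norm_eq_abs, abs_of_nonneg (by positivity)]
    have h1 : b / 2 * x ^ 2 ≤ Real.exp (b / 2 * x ^ 2) := by
      nlinarith [Real.add_one_le_exp (b / 2 * x ^ 2), sq_nonneg x]
    have h2 : x ^ 2 ≤ 2 / b * Real.exp (b / 2 * x ^ 2) := by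
      rw [div_mul_eq_mul_div, le_div_iff₀ hb]  -- maybe wrong; fix below
      nlinarith
    calc x ^ 2 * Real.exp (-b * x ^ 2)
        ≤ (2 / b * Real.exp (b / 2 * x ^ 2)) * Real.exp (-b * x ^ 2) :=
          mul_le_mul_of_nonneg_right h2 (Real.exp_pos _).le
      _ = 2 / b * Real.exp (-(b / 2) * x ^ 2) := by
          rw [mul_assoc, ← Real.exp_add]; ring_nf

lemma integrable_sq_gauss {t : ℝ} (ht : 0 < t) :
    Integrable (fun x => x ^ 2) (gaussianReal 0 t.toNNReal) := by
  have ht' : t.toNNReal ≠ 0 := by simp [ht, ht.le, ht.ne']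
  rw [gaussianReal_of_var_ne_zero 0 ht',
    integrable_withDensity_iff (measurable_gaussianPDF _ _)
      (ae_of_all _ fun x => ENNReal.ofReal_lt_top)]
  have : ∀ x : ℝ, x ^ 2 * (gaussianPDF 0 t.toNNReal x).toReal
      = (Real.sqrt (2 * π * t))⁻¹ * (x ^ 2 * Real.exp (-(2 * t)⁻¹ * x ^ 2)) := by
    intro x
    rw [gaussianPDF, ENNReal.toReal_ofReal (gaussianPDFReal_nonneg _ _ _), gaussianPDFReal]
    rw [Real.coe_toNNReal _ ht.le]
    rw [show -(x - 0) ^ 2 / (2 * t) = -(2 * t)⁻¹ * x ^ 2 by field_simp; ring]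
    ring
  simp_rw [this]
  exact (integrable_sq_mul_exp_neg_mul_sq (by positivity)).const_mul _

lemma relEnt_gauss_eq {a t₀ : ℝ} (ha : 0 < a) (hat₀ : a < t₀) :
    relEnt (gaussianReal 0 t₀.toNNReal) (gaussianReal 0 a.toNNReal) =
      ((Real.log (Real.sqrt (a / t₀)) + (a⁻¹ - t₀⁻¹) / 2 *
        ∫ x, x ^ 2 ∂(gaussianReal 0 t₀.toNNReal) : ℝ) : EReal) := by
  have ht₀ : 0 < t₀ := ha.trans hat₀
  set ν₁ := gaussianReal 0 t₀.toNNReal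
  set ν₂ := gaussianReal 0 a.toNNReal
  set c := Real.log (Real.sqrt (a / t₀))
  set β := (a⁻¹ - t₀⁻¹) / 2
  have hae : (fun x => Real.log ((ν₁.rnDeriv ν₂ x).toReal)) =ᵐ[ν₁] fun x => c + β * x ^ 2 := by
    have h1 : ∀ᵐ x ∂ν₁, ν₁.rnDeriv ν₂ x = ENNReal.ofReal (lr a t₀ x) :=
      (gauss_rnDeriv ha hat₀).filter_mono (gauss_ac ha hat₀).ae_le
    filter_upwards [h1] with x hx
    rw [hx, ENNReal.toReal_ofReal (lr_pos ha hat₀ x).le, log_lr ha hat₀ x]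
  have hint : Integrable (fun x => c + β * x ^ 2) ν₁ :=
    (integrable_const _).add ((integrable_sq_gauss ht₀).const_mul β)
  have hint' : Integrable (fun x => Real.log ((ν₁.rnDeriv ν₂ x).toReal)) ν₁ :=
    hint.congr hae.symm
  rw [relEnt, if_pos ⟨gauss_ac ha hat₀, hint'⟩, integral_congr_ae hae]
  norm_cast
  rw [integral_add (integrable_const _) ((integrable_sq_gauss ht₀).const_mul β),
    integral_const, integral_const_mul]
  simp
  exact Or.inl rfl

lemma relEnt_gauss_lt_top {a t₀ : ℝ} (ha : 0 < a) (hat₀ : a < t₀) :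
    relEnt (gaussianReal 0 t₀.toNNReal) (gaussianReal 0 a.toNNReal) < ⊤ := by
  rw [relEnt_gauss_eq ha hat₀]
  exact EReal.coe_lt_top _


section PW
variable (μ : Measure ℝ) [IsProbabilityMeasure μ]

lemma pdfm {t : ℝ} (x : ℝ) :
    Measurable fun y => gaussianPDFReal 0 t.toNNReal (x - y) :=
  (measurable_gaussianPDFReal _ _).comp (measurable_id.const_sub x)

/-- Bochner-integral representation of the convolution density. -/
lemma convDens_toReal {t : ℝ} (x : ℝ) :
    (convDens μ t x).toReal = ∫ y, gaussianPDFReal 0 t.toNNReal (x - y) ∂μ := by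
  rw [integral_eq_lintegral_of_nonneg_ae (ae_of_all _ fun y => gaussianPDFReal_nonneg _ _ _)
    (pdfm x).aestronglyMeasurable]
  rfl

lemma integrable_pdf_shift {t : ℝ} (x : ℝ) :
    Integrable (fun y => gaussianPDFReal 0 t.toNNReal (x - y)) μ := by
  apply Integrable.mono' (integrable_const ((Real.sqrt (2 * π * t.toNNReal))⁻¹))
    (pdfm x).aestronglyMeasurable
  refine ae_of_all _ fun y => ?_
  rw [Real.norm_eq_abs, abs_of_nonneg (gaussianPDFReal_nonneg _ _ _)]
  exact gaussianPDFReal_le _ _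

lemma convDens_toReal_pos {t : ℝ} (ht : 0 < t) (x : ℝ) : 0 < (convDens μ t x).toReal :=
  ENNReal.toReal_pos (convDens_pos μ ht x).ne' (convDens_lt_top μ t x).ne

lemma sq_mul_exp_le {b : ℝ} (hb : 0 < b) (x : ℝ) :
    x ^ 2 * Real.exp (-b * x ^ 2) ≤ b⁻¹ := by
  have hE : (0:ℝ) < Real.exp (b * x ^ 2) := Real.exp_pos _
  have h1 : b * x ^ 2 + 1 ≤ Real.exp (b * x ^ 2) := Real.add_one_le_exp _
  rw [show -b * x ^ 2 = -(b * x ^ 2) by ring, Real.exp_neg, mul_inv_le_iff₀ hE]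
  calc x ^ 2 = b⁻¹ * (b * x ^ 2) := by field_simp
    _ ≤ b⁻¹ * Real.exp (b * x ^ 2) := by
        apply mul_le_mul_of_nonneg_left _ (by positivity)
        nlinarith
  
lemma sq_mul_pdf_le {t : ℝ} (ht : 0 < t) (w : ℝ) :
    w ^ 2 * gaussianPDFReal 0 t.toNNReal w ≤ 2 * t * (Real.sqrt (2 * π * t))⁻¹ := by
  rw [gaussianPDFReal, Real.coe_toNNReal _ ht.le, sub_zero,
    show -w ^ 2 / (2 * t) = -(2 * t)⁻¹ * w ^ 2 by field_simp]
  calc w ^ 2 * ((Real.sqrt (2 * π * t))⁻¹ * Real.exp (-(2 * t)⁻¹ * w ^ 2))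
      = (Real.sqrt (2 * π * t))⁻¹ * (w ^ 2 * Real.exp (-(2 * t)⁻¹ * w ^ 2)) := by ring
    _ ≤ (Real.sqrt (2 * π * t))⁻¹ * ((2 * t)⁻¹)⁻¹ := by
        apply mul_le_mul_of_nonneg_left (sq_mul_exp_le (by positivity) w) (by positivity)
    _ = 2 * t * (Real.sqrt (2 * π * t))⁻¹ := by rw [inv_inv]; ring

/-- The pointwise Jensen inequality for the log of the ratio of convolution densities. -/
lemma key_jensen {a t₀ : ℝ} (ha : 0 < a) (hat₀ : a < t₀) (x : ℝ) :
    Real.log ((convDens μ t₀ x).toReal / (convDens μ a x).toReal) ≤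
      Real.log (Real.sqrt (a / t₀)) + (a⁻¹ - t₀⁻¹) / 2 *
        ((∫ y, (x - y) ^ 2 * gaussianPDFReal 0 t₀.toNNReal (x - y) ∂μ) /
          (convDens μ t₀ x).toReal) := by
  have ht₀ : 0 < t₀ := ha.trans hat₀
  set c := Real.log (Real.sqrt (a / t₀)) with hc
  set β := (a⁻¹ - t₀⁻¹) / 2 with hβ
  set p₁ : ℝ → ℝ := gaussianPDFReal 0 t₀.toNNReal with hp₁
  set p₂ : ℝ → ℝ := gaussianPDFReal 0 a.toNNReal with hp₂
  set f₁ : ℝ := (convDens μ t₀ x).toReal with hf₁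
  set f₂ : ℝ := (convDens μ a x).toReal with hf₂
  have hf₁pos : 0 < f₁ := convDens_toReal_pos μ ht₀ x
  have hf₂pos : 0 < f₂ := convDens_toReal_pos μ ha x
  have hβ0 : 0 ≤ β := beta_nonneg ha hat₀
  -- the exponential form of the ratio
  have hsq : Real.sqrt (a / t₀) = Real.exp c := by
    rw [hc, Real.exp_log (Real.sqrt_pos.2 (div_pos ha ht₀))]
  have hp₂eq : ∀ w, p₂ w = p₁ w * Real.exp (-c - β * w ^ 2) := by
    intro w
    have h1 : p₁ w = Real.exp (c + β * w ^ 2) * p₂ w := by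
      rw [hp₁, pdf_ratio ha hat₀ w, lr, hsq, ← Real.exp_add, ← hβ, hp₂]
    have h2 : Real.exp (c + β * w ^ 2) * Real.exp (-c - β * w ^ 2) = 1 := by
      rw [← Real.exp_add, show c + β * w ^ 2 + (-c - β * w ^ 2) = 0 by ring, Real.exp_zero]
    rw [h1, mul_comm (Real.exp (c + β * w ^ 2)) (p₂ w), mul_assoc, h2, mul_one]
  -- the tilted probability measure
  set dN : ℝ → ℝ≥0 := fun y => (p₁ (x - y) / f₁).toNNReal with hdN
  have hdNm : Measurable dN := ((pdfm (t := t₀) x).div_const f₁).real_toNNReal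
  set Q : Measure ℝ := μ.withDensity (fun y => ((dN y : ℝ≥0) : ℝ≥0∞)) with hQ
  have hdcoe : ∀ y, ((dN y : ℝ≥0) : ℝ) = p₁ (x - y) / f₁ := fun y =>
    Real.coe_toNNReal _ (div_nonneg (gaussianPDFReal_nonneg _ _ _) hf₁pos.le)
  have hQint : ∀ g : ℝ → ℝ, ∫ y, g y ∂Q = ∫ y, (p₁ (x - y) / f₁) * g y ∂μ := by
    intro g
    rw [hQ, integral_withDensity_eq_integral_smul hdNm]
    congr 1
    ext y
    rw [NNReal.smul_def, hdcoe y, smul_eq_mul]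
  have hQofReal : (fun y => ((dN y : ℝ≥0) : ℝ≥0∞)) =
      fun y => ENNReal.ofReal (p₁ (x - y) / f₁) := rfl
  have hQuniv : Q Set.univ = 1 := by
    rw [hQ, withDensity_apply _ MeasurableSet.univ, Measure.restrict_univ, hQofReal]
    have : ∀ y, ENNReal.ofReal (p₁ (x - y) / f₁)
        = ENNReal.ofReal (p₁ (x - y)) * (ENNReal.ofReal f₁)⁻¹ := by
      intro y
      rw [ENNReal.ofReal_div_of_pos hf₁pos, div_eq_mul_inv]
    simp_rw [this]
    rw [lintegral_mul_const' _ _ (by simp [hf₁pos]), hf₁, ENNReal.ofReal_toReal (convDens_lt_top μ t₀ x).ne]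
    rw [show ∫⁻ y, ENNReal.ofReal (p₁ (x - y)) ∂μ = convDens μ t₀ x from rfl]
    exact ENNReal.mul_inv_cancel (convDens_pos μ ht₀ x).ne' (convDens_lt_top μ t₀ x).ne
  have hQprob : IsProbabilityMeasure Q := ⟨hQuniv⟩
  -- ψ and its properties
  set ψ : ℝ → ℝ := fun y => -c - β * (x - y) ^ 2 with hψ
  have hψm : Measurable ψ := by
    apply Measurable.sub measurable_const
    exact (((measurable_id.const_sub x).pow_const 2).const_mul β)
  -- constants
  set C₁ : ℝ := (Real.sqrt (2 * π * t₀.toNNReal))⁻¹ with hC₁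
  set D₁ : ℝ := 2 * t₀ * (Real.sqrt (2 * π * t₀))⁻¹ with hD₁
  set C₂ : ℝ := (Real.sqrt (2 * π * a.toNNReal))⁻¹ with hC₂
  have hC₁0 : 0 ≤ C₁ := by positivity
  have hD₁0 : 0 ≤ D₁ := by rw [hD₁]; positivity
  have hpb : ∀ y, p₁ (x - y) ≤ C₁ := fun y => gaussianPDFReal_le _ _
  have hsb : ∀ y, (x - y) ^ 2 * p₁ (x - y) ≤ D₁ := fun y => sq_mul_pdf_le ht₀ _
  have hp0 : ∀ y, 0 ≤ p₁ (x - y) := fun y => gaussianPDFReal_nonneg _ _ _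
  have hdfin : ∀ᵐ y ∂μ, ((dN y : ℝ≥0) : ℝ≥0∞) < ∞ := ae_of_all _ fun y => ENNReal.coe_lt_top
  have hdNm' : Measurable fun y => ((dN y : ℝ≥0) : ℝ≥0∞) := hdNm.coe_nnreal_ennreal
  have hdtoReal : ∀ y, (((dN y : ℝ≥0) : ℝ≥0∞)).toReal = p₁ (x - y) / f₁ := fun y => hdcoe y
  -- integrability of ψ wrt Q
  have hintψQ : Integrable ψ Q := by
    rw [hQ, integrable_withDensity_iff hdNm' hdfin]
    apply Integrable.mono' (integrable_const ((|c| * C₁ + β * D₁) / f₁))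
    · apply Measurable.aestronglyMeasurable
      exact hψm.mul (ENNReal.measurable_toReal.comp hdNm')
    · refine ae_of_all _ fun y => ?_
      rw [hdtoReal y, norm_mul, Real.norm_eq_abs, Real.norm_eq_abs,
        abs_of_nonneg (div_nonneg (hp0 y) hf₁pos.le), div_eq_mul_inv, ← mul_assoc,
        div_eq_mul_inv]
      apply mul_le_mul_of_nonneg_right _ (by positivity)
      have h0 : 0 ≤ β * (x - y) ^ 2 := mul_nonneg hβ0 (sq_nonneg _)
      have habs : |ψ y| ≤ |c| + β * (x - y) ^ 2 := by
        rw [hψ]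
        calc |(-c - β * (x - y) ^ 2)| ≤ |(-c)| + |β * (x - y) ^ 2| := abs_sub _ _
          _ = |c| + β * (x - y) ^ 2 := by rw [abs_neg, abs_of_nonneg h0]
      nlinarith [mul_le_mul_of_nonneg_right habs (hp0 y),
        mul_le_mul_of_nonneg_left (hpb y) (abs_nonneg c),
        mul_le_mul_of_nonneg_left (hsb y) hβ0]
  -- integrability of exp ∘ ψ wrt Q
  have hexppt : ∀ y, Real.exp (ψ y) * (p₁ (x - y) / f₁) = p₂ (x - y) / f₁ := by
    intro y
    rw [hψ, hp₂eq (x - y)]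
    ring
  have hintexpQ : Integrable (Real.exp ∘ ψ) Q := by
    rw [hQ, integrable_withDensity_iff hdNm' hdfin]
    apply Integrable.mono' (integrable_const (C₂ / f₁))
    · exact ((Real.measurable_exp.comp hψm).mul
        (ENNReal.measurable_toReal.comp hdNm')).aestronglyMeasurable
    · refine ae_of_all _ fun y => ?_
      rw [hdtoReal y, Function.comp_apply, hexppt y, Real.norm_eq_abs,
        abs_of_nonneg (div_nonneg (gaussianPDFReal_nonneg _ _ _) hf₁pos.le)]
      gcongr
      exact gaussianPDFReal_le _ _
  -- Jensen's inequality
  have hJ : Real.exp (∫ y, ψ y ∂Q) ≤ ∫ y, Real.exp (ψ y) ∂Q := by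
    haveI := hQprob
    exact convexOn_exp.map_integral_le continuous_exp.continuousOn isClosed_univ
      (ae_of_all _ fun y => Set.mem_univ _) hintψQ hintexpQ
  -- compute ∫ exp ∘ ψ ∂Q = f₂ / f₁
  have hexpint : ∫ y, Real.exp (ψ y) ∂Q = f₂ / f₁ := by
    rw [hQint (fun y => Real.exp (ψ y))]
    have heq2 : ∀ y, p₁ (x - y) / f₁ * Real.exp (ψ y) = p₂ (x - y) * f₁⁻¹ := by
      intro y
      rw [show p₂ (x - y) * f₁⁻¹ = p₂ (x - y) / f₁ from by ring, ← hexppt y]; ring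
    simp_rw [heq2, hp₂]
    rw [integral_mul_const, ← convDens_toReal, ← hf₂]
    ring
  -- compute ∫ ψ ∂Q
  set V : ℝ := ∫ y, (x - y) ^ 2 * p₁ (x - y) ∂μ with hV
  have hVint : Integrable (fun y => (x - y) ^ 2 * p₁ (x - y)) μ := by
    apply Integrable.mono' (integrable_const D₁)
    · exact (((measurable_id.const_sub x).pow_const 2).mul (pdfm x)).aestronglyMeasurable
    · refine ae_of_all _ fun y => ?_
      rw [Real.norm_eq_abs, abs_of_nonneg (mul_nonneg (sq_nonneg _) (hp0 y))]
      exact hsb y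
  have hψint : ∫ y, ψ y ∂Q = -c - β * (V / f₁) := by
    rw [hQint ψ]
    have heq : ∀ y, p₁ (x - y) / f₁ * ψ y
        = (-c / f₁) * p₁ (x - y) + (-β / f₁) * ((x - y) ^ 2 * p₁ (x - y)) := by
      intro y
      rw [hψ]; ring
    simp_rw [heq]
    rw [integral_add (((integrable_pdf_shift μ x)).const_mul _) (hVint.const_mul _),
      integral_const_mul, integral_const_mul, ← convDens_toReal, ← hf₁, ← hV]
    field_simp
    ring
  -- conclude
  rw [hψint, hexpint] at hJ
  have hlog : -c - β * (V / f₁) ≤ Real.log (f₂ / f₁) :=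
    (Real.le_log_iff_exp_le (div_pos hf₂pos hf₁pos)).2 hJ
  rw [Real.log_div hf₂pos.ne' hf₁pos.ne'] at hlog
  rw [Real.log_div hf₁pos.ne' hf₂pos.ne']
  linarith

end PW

lemma integrable_sq_mul_pdfReal {t : ℝ} (ht : 0 < t) :
    Integrable (fun x => x ^ 2 * gaussianPDFReal 0 t.toNNReal x) volume := by
  have h : ∀ x : ℝ, x ^ 2 * gaussianPDFReal 0 t.toNNReal x
      = (Real.sqrt (2 * π * t))⁻¹ * (x ^ 2 * Real.exp (-(2 * t)⁻¹ * x ^ 2)) := by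
    intro x
    rw [gaussianPDFReal, Real.coe_toNNReal _ ht.le,
      show -(x - 0) ^ 2 / (2 * t) = -(2 * t)⁻¹ * x ^ 2 by field_simp; ring]
    ring
  simp_rw [h]
  exact (integrable_sq_mul_exp_neg_mul_sq (by positivity)).const_mul _

lemma integrable_sq_pdf_shift (μ : Measure ℝ) [IsProbabilityMeasure μ] {t : ℝ} (ht : 0 < t)
    (x : ℝ) : Integrable (fun y => (x - y) ^ 2 * gaussianPDFReal 0 t.toNNReal (x - y)) μ := by
  apply Integrable.mono' (integrable_const (2 * t * (Real.sqrt (2 * π * t))⁻¹))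
  · exact (((measurable_id.const_sub x).pow_const 2).mul
      ((measurable_gaussianPDFReal _ _).comp (measurable_id.const_sub x))).aestronglyMeasurable
  · refine ae_of_all _ fun y => ?_
    rw [Real.norm_eq_abs, abs_of_nonneg (mul_nonneg (sq_nonneg _) (gaussianPDFReal_nonneg _ _ _))]
    exact sq_mul_pdf_le ht _

lemma sq_moment_eq {t : ℝ} (ht : 0 < t) :
    ∫ x, x ^ 2 ∂(gaussianReal 0 t.toNNReal) =
      ∫ w, w ^ 2 * gaussianPDFReal 0 t.toNNReal w := by
  have ht' : t.toNNReal ≠ 0 := by simp [ht, ht.le, ht.ne']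
  rw [gaussianReal_of_var_ne_zero 0 ht']
  have h : (gaussianPDF 0 t.toNNReal)
      = fun x => (((gaussianPDFReal 0 t.toNNReal x).toNNReal : ℝ≥0) : ℝ≥0∞) := rfl
  rw [h, integral_withDensity_eq_integral_smul (measurable_gaussianPDFReal 0 t.toNNReal).real_toNNReal]
  congr 1
  funext x
  rw [NNReal.smul_def, Real.coe_toNNReal _ (gaussianPDFReal_nonneg _ _ _), smul_eq_mul]
  ring

lemma pdfm' {t : ℝ} (x : ℝ) :
    Measurable fun y => gaussianPDFReal 0 t.toNNReal (x - y) :=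
  (measurable_gaussianPDFReal _ _).comp (measurable_id.const_sub x)

section Main
variable (μ : Measure ℝ) [IsProbabilityMeasure μ]

lemma relEnt_conv_le {a t₀ : ℝ} (ha : 0 < a) (hat₀ : a < t₀)
    [h₁p : IsProbabilityMeasure (volume.withDensity (convDens μ t₀))]
    [h₂p : IsProbabilityMeasure (volume.withDensity (convDens μ a))] :
    relEnt (volume.withDensity (convDens μ t₀)) (volume.withDensity (convDens μ a))
      ≤ ((Real.log (Real.sqrt (a / t₀)) + (a⁻¹ - t₀⁻¹) / 2 *
          ∫ w, w ^ 2 * gaussianPDFReal 0 t₀.toNNReal w : ℝ) : EReal) := by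
  have ht₀ : 0 < t₀ := ha.trans hat₀
  set c := Real.log (Real.sqrt (a / t₀)) with hc
  set β := (a⁻¹ - t₀⁻¹) / 2 with hβ
  have hβ0 : 0 ≤ β := beta_nonneg ha hat₀
  set F₁ := convDens μ t₀ with hF₁
  set F₂ := convDens μ a with hF₂
  set η₁ := volume.withDensity F₁ with hη₁
  set η₂ := volume.withDensity F₂ with hη₂
  have hF₁m : Measurable F₁ := measurable_convDens μ t₀
  have hF₂m : Measurable F₂ := measurable_convDens μ a
  set G : ℝ → ℝ≥0∞ := fun x => F₁ x / F₂ x with hG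
  have hGm : Measurable G := hF₁m.div hF₂m
  set g : ℝ → ℝ := fun x => Real.log ((F₁ x).toReal / (F₂ x).toReal) with hg
  have hgm : Measurable g :=
    Real.measurable_log.comp ((hF₁m.ennreal_toReal).div (hF₂m.ennreal_toReal))
  have hf₁pos : ∀ x, 0 < (F₁ x).toReal := fun x => convDens_toReal_pos μ ht₀ x
  have hf₂pos : ∀ x, 0 < (F₂ x).toReal := fun x => convDens_toReal_pos μ ha x
  -- η₁ = η₂.withDensity G
  have hηeq : η₁ = η₂.withDensity G := by
    rw [hη₂, ← withDensity_mul _ hF₂m hGm, hη₁]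
    congr 1
    funext x
    rw [Pi.mul_apply, hG]
    exact (ENNReal.mul_div_cancel (convDens_pos μ ha x).ne' (convDens_lt_top μ a x).ne).symm
  -- absolute continuity
  have hvolac : (volume : Measure ℝ) ≪ η₂ := by
    refine Measure.AbsolutelyContinuous.mk fun s hs h0 => ?_
    rw [hη₂, withDensity_apply _ hs] at h0
    rw [lintegral_eq_zero_iff hF₂m] at h0
    have h2 : ∀ᵐ x ∂(volume.restrict s), False := by
      filter_upwards [h0] with x hx
      exact (convDens_pos μ ha x).ne' hx
    simpa [ae_iff] using h2
  have hac : η₁ ≪ η₂ := (withDensity_absolutelyContinuous volume F₁).trans hvolac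
  have hrn : η₁.rnDeriv η₂ =ᵐ[η₂] G := by
    rw [hηeq]
    exact Measure.rnDeriv_withDensity η₂ hGm
  -- the integrand is a.e. equal to g
  have haeg : (fun x => Real.log ((η₁.rnDeriv η₂ x).toReal)) =ᵐ[η₁] g := by
    have h1 : ∀ᵐ x ∂η₁, η₁.rnDeriv η₂ x = G x := hrn.filter_mono hac.ae_le
    filter_upwards [h1] with x hx
    rw [hx, hG, ENNReal.toReal_div]
  -- lower bound c ≤ g x
  have hlow : ∀ x, c ≤ g x := by
    intro x
    have hF : ENNReal.ofReal (Real.sqrt (a / t₀)) * F₂ x ≤ F₁ x := by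
      rw [hF₁, hF₂, convDens, convDens, ← lintegral_const_mul _ (pdfm' x).ennreal_ofReal]
      apply lintegral_mono fun y => ?_
      rw [← ENNReal.ofReal_mul (Real.sqrt_nonneg _)]
      apply ENNReal.ofReal_le_ofReal
      rw [pdf_ratio ha hat₀]
      exact mul_le_mul_of_nonneg_right (sqrt_ratio_le_lr ha hat₀ _)
        (gaussianPDFReal_nonneg _ _ _)
    have hF' : Real.sqrt (a / t₀) * (F₂ x).toReal ≤ (F₁ x).toReal := by
      have := ENNReal.toReal_mono (convDens_lt_top μ t₀ x).ne hF
      rwa [ENNReal.toReal_mul, ENNReal.toReal_ofReal (Real.sqrt_nonneg _)] at this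
    rw [hg, hc]
    apply Real.log_le_log (Real.sqrt_pos.2 (div_pos ha ht₀))
    rw [le_div_iff₀ (hf₂pos x)]
    exact hF'
  -- the key pointwise lintegral bound
  set W : ℝ → ℝ≥0∞ := fun x =>
    ∫⁻ y, ENNReal.ofReal ((x - y) ^ 2 * gaussianPDFReal 0 t₀.toNNReal (x - y)) ∂μ with hW
  have hWm : Measurable W := by
    apply Measurable.lintegral_prod_right
    apply Measurable.ennreal_ofReal
    exact ((measurable_fst.sub measurable_snd).pow_const 2).mul
      ((measurable_gaussianPDFReal _ _).comp (measurable_fst.sub measurable_snd))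
  have hptw : ∀ x, ENNReal.ofReal (g x - c) * F₁ x ≤ ENNReal.ofReal β * W x := by
    intro x
    set V : ℝ := ∫ y, (x - y) ^ 2 * gaussianPDFReal 0 t₀.toNNReal (x - y) ∂μ with hV
    have hVnn : 0 ≤ V := integral_nonneg fun y =>
      mul_nonneg (sq_nonneg _) (gaussianPDFReal_nonneg _ _ _)
    have hkey : (g x - c) * (F₁ x).toReal ≤ β * V := by
      have h3 := key_jensen μ ha hat₀ x
      have h2 : g x - c ≤ β * (V / (F₁ x).toReal) := by
        simp only [hg, hc, hβ, hV, hF₁, hF₂]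
        linarith
      calc (g x - c) * (F₁ x).toReal ≤ β * (V / (F₁ x).toReal) * (F₁ x).toReal :=
            mul_le_mul_of_nonneg_right h2 (hf₁pos x).le
        _ = β * V := by
            rw [mul_assoc, div_mul_cancel₀ _ (hf₁pos x).ne']
    calc ENNReal.ofReal (g x - c) * F₁ x
        = ENNReal.ofReal ((g x - c) * (F₁ x).toReal) := by
          rw [ENNReal.ofReal_mul (by linarith [hlow x]),
            ENNReal.ofReal_toReal (convDens_lt_top μ t₀ x).ne]
      _ ≤ ENNReal.ofReal (β * V) := ENNReal.ofReal_le_ofReal hkey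
      _ = ENNReal.ofReal β * ENNReal.ofReal V := ENNReal.ofReal_mul hβ0
      _ ≤ ENNReal.ofReal β * W x := by
          apply mul_le_mul_right (le_of_eq _) _
          exact ofReal_integral_eq_lintegral_ofReal (integrable_sq_pdf_shift μ ht₀ x)
            (ae_of_all _ fun y => mul_nonneg (sq_nonneg _) (gaussianPDFReal_nonneg _ _ _))
  -- total mass of W
  set M : ℝ := ∫ w, w ^ 2 * gaussianPDFReal 0 t₀.toNNReal w with hM
  have hMnn : 0 ≤ M := integral_nonneg fun w =>
    mul_nonneg (sq_nonneg _) (gaussianPDFReal_nonneg _ _ _)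
  have hWtot : ∫⁻ x, W x ∂volume = ENNReal.ofReal M := by
    have hswap : ∫⁻ x, W x ∂volume =
        ∫⁻ y, ∫⁻ x, ENNReal.ofReal ((x - y) ^ 2 * gaussianPDFReal 0 t₀.toNNReal (x - y))
          ∂volume ∂μ := by
      rw [hW]
      simp only []
      rw [← lintegral_lintegral_swap]
      apply Measurable.aemeasurable
      apply Measurable.ennreal_ofReal
      exact ((measurable_snd.sub measurable_fst).pow_const 2).mul
        ((measurable_gaussianPDFReal _ _).comp (measurable_snd.sub measurable_fst))
    rw [hswap]
    have htrans : ∀ y : ℝ, ∫⁻ x, ENNReal.ofReal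
        ((x - y) ^ 2 * gaussianPDFReal 0 t₀.toNNReal (x - y)) ∂volume =
        ∫⁻ w, ENNReal.ofReal (w ^ 2 * gaussianPDFReal 0 t₀.toNNReal w) ∂volume := by
      intro y
      conv_rhs => rw [← map_add_right_eq_self volume (-y)]
      rw [lintegral_map (by
        exact (((measurable_id.pow_const 2).mul (measurable_gaussianPDFReal _ _)).ennreal_ofReal))
        (measurable_add_const (-y))]
      simp_rw [← sub_eq_add_neg]
    simp_rw [htrans]
    rw [lintegral_const, measure_univ, mul_one]
    rw [← ofReal_integral_eq_lintegral_ofReal (integrable_sq_mul_pdfReal ht₀)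
      (ae_of_all _ fun w => mul_nonneg (sq_nonneg _) (gaussianPDFReal_nonneg _ _ _))]
  -- lintegral bound
  have hkey2 : ∫⁻ x, ENNReal.ofReal (g x - c) ∂η₁ ≤ ENNReal.ofReal (β * M) := by
    rw [hη₁, lintegral_withDensity_eq_lintegral_mul _ hF₁m
      (Measurable.ennreal_ofReal (hgm.sub measurable_const) : Measurable fun x => ENNReal.ofReal (g x - c))]
    calc ∫⁻ x, (F₁ * fun x => ENNReal.ofReal (g x - c)) x ∂volume
        ≤ ∫⁻ x, ENNReal.ofReal β * W x ∂volume := by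
          apply lintegral_mono fun x => ?_
          rw [Pi.mul_apply, mul_comm]
          exact hptw x
      _ = ENNReal.ofReal β * ENNReal.ofReal M := by
          rw [lintegral_const_mul _ hWm, hWtot]
      _ = ENNReal.ofReal (β * M) := (ENNReal.ofReal_mul hβ0).symm
  -- integrability of g wrt η₁
  have habs : ∀ x, (‖g x‖₊ : ℝ≥0∞) ≤ ENNReal.ofReal |c| + ENNReal.ofReal (g x - c) := by
    intro x
    have h1 : |g x| ≤ |c| + (g x - c) := by
      rcases abs_cases (g x) with ⟨h, _⟩ | ⟨h, _⟩ <;> rcases abs_cases c with ⟨h2, _⟩ | ⟨h2, _⟩ <;>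
        [skip; skip; skip; skip] <;> nlinarith [hlow x]
    calc (‖g x‖₊ : ℝ≥0∞) = ENNReal.ofReal |g x| := by
          exact Real.enorm_eq_ofReal_abs _
      _ ≤ ENNReal.ofReal (|c| + (g x - c)) := ENNReal.ofReal_le_ofReal h1
      _ = ENNReal.ofReal |c| + ENNReal.ofReal (g x - c) :=
          ENNReal.ofReal_add (abs_nonneg _) (by linarith [hlow x])
  have hgint : Integrable g η₁ := by
    constructor
    · exact hgm.aestronglyMeasurable
    · rw [hasFiniteIntegral_def]
      calc ∫⁻ x, (‖g x‖₊ : ℝ≥0∞) ∂η₁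
          ≤ ∫⁻ x, (ENNReal.ofReal |c| + ENNReal.ofReal (g x - c)) ∂η₁ :=
            lintegral_mono fun x => habs x
        _ = ENNReal.ofReal |c| + ∫⁻ x, ENNReal.ofReal (g x - c) ∂η₁ := by
            rw [lintegral_add_left measurable_const, lintegral_const, measure_univ, mul_one]
        _ ≤ ENNReal.ofReal |c| + ENNReal.ofReal (β * M) := by
            exact add_le_add_right hkey2 _
        _ < ∞ := by
            apply ENNReal.add_lt_top.2
            exact ⟨ENNReal.ofReal_lt_top, ENNReal.ofReal_lt_top⟩
  -- now the value of relEnt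
  have hgint' : Integrable (fun x => Real.log ((η₁.rnDeriv η₂ x).toReal)) η₁ :=
    hgint.congr haeg.symm
  rw [relEnt, if_pos ⟨hac, hgint'⟩]
  rw [integral_congr_ae haeg]
  rw [EReal.coe_le_coe_iff]
  -- ∫ g ∂η₁ ≤ c + β * M
  have hsub : Integrable (fun x => g x - c) η₁ := hgint.sub (integrable_const c)
  have hval : ∫ x, g x ∂η₁ = c + ∫ x, (g x - c) ∂η₁ := by
    rw [integral_sub hgint (integrable_const c), integral_const]
    simp
  rw [hval]
  have hbound : ∫ x, (g x - c) ∂η₁ ≤ β * M := by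
    have hnn : (0 : ℝ → ℝ) ≤ᵐ[η₁] fun x => g x - c := ae_of_all _ fun x => by
      simp only [Pi.zero_apply]
      linarith [hlow x]
    rw [integral_eq_lintegral_of_nonneg_ae hnn
      (hgm.sub measurable_const).aestronglyMeasurable]
    calc (∫⁻ x, ENNReal.ofReal (g x - c) ∂η₁).toReal
        ≤ (ENNReal.ofReal (β * M)).toReal := by
          apply ENNReal.toReal_mono ENNReal.ofReal_ne_top hkey2
      _ = β * M := ENNReal.toReal_ofReal (mul_nonneg hβ0 hMnn)
  linarith

end Main


/-- Data processing bound: `D(X+√t₀Z ‖ X+√aZ) ≤ D(N(0,t₀) ‖ N(0,a)) < ∞`. -/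
theorem relEnt_gaussian_perturbations {Ω : Type*} [MeasurableSpace Ω] (P : Measure Ω)
    [IsProbabilityMeasure P] (X Z : Ω → ℝ) (hX : Measurable X) (hZ : Measurable Z)
    (hindep : IndepFun X Z P) (hgauss : Measure.map Z P = gaussianReal 0 1)
    (a t₀ : ℝ) (ha : 0 < a) (hat₀ : a < t₀) :
    relEnt (Measure.map (fun ω => X ω + Real.sqrt t₀ * Z ω) P)
        (Measure.map (fun ω => X ω + Real.sqrt a * Z ω) P)
      ≤ relEnt (gaussianReal 0 t₀.toNNReal) (gaussianReal 0 a.toNNReal) ∧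
    relEnt (gaussianReal 0 t₀.toNNReal) (gaussianReal 0 a.toNNReal) < ⊤ := by
  have ht₀ : 0 < t₀ := ha.trans hat₀
  set μ : Measure ℝ := Measure.map X P with hμ
  haveI : IsProbabilityMeasure μ := Measure.isProbabilityMeasure_map hX.aemeasurable
  have h1 : Measure.map (fun ω => X ω + Real.sqrt t₀ * Z ω) P
      = volume.withDensity (convDens μ t₀) := by
    rw [map_add_sqrt_mul hX hZ hindep hgauss ht₀, conv_eq_withDensity μ ht₀]
  have h2 : Measure.map (fun ω => X ω + Real.sqrt a * Z ω) P
      = volume.withDensity (convDens μ a) := by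
    rw [map_add_sqrt_mul hX hZ hindep hgauss ha, conv_eq_withDensity μ ha]
  haveI i1 : IsProbabilityMeasure (volume.withDensity (convDens μ t₀)) := by
    rw [← h1]
    exact Measure.isProbabilityMeasure_map (hX.add (hZ.const_mul _)).aemeasurable
  haveI i2 : IsProbabilityMeasure (volume.withDensity (convDens μ a)) := by
    rw [← h2]
    exact Measure.isProbabilityMeasure_map (hX.add (hZ.const_mul _)).aemeasurable
  constructor
  · rw [h1, h2, relEnt_gauss_eq ha hat₀, sq_moment_eq ht₀]
    exact relEnt_conv_le μ ha hat₀
  · exact relEnt_gauss_lt_top ha hat₀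
end

section
/- For probability densities f, g on ℝ, ∫ f(x) |log(f(x)/g(x))| dx ≤ D(f‖g) + √(2 D(f‖g)), where D(f‖g) = ∫ f log(f/g) is the relative entropy. -/
open MeasureTheory ProbabilityTheory Real
open scoped ENNReal NNReal Classical

private lemma k_hasDeriv {x : ℝ} (hx : 0 < x) :
    HasDerivAt (fun t : ℝ => (t + 1) * Real.log t - 2 * (t - 1))
      (Real.log x + (x + 1) * x⁻¹ - 2) x := by
  have h1 : HasDerivAt (fun t : ℝ => t + 1) 1 x := (hasDerivAt_id x).add_const 1
  have h2 := h1.mul (Real.hasDerivAt_log hx.ne')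
  have h3 : HasDerivAt (fun t : ℝ => 2 * (t - 1)) 2 x := by
    simpa using ((hasDerivAt_id x).sub_const 1).const_mul 2
  have h4 := h2.sub h3
  simp only [one_mul] at h4
  exact h4

private lemma k_deriv_nonneg {x : ℝ} (hx : 0 < x) :
    0 ≤ Real.log x + (x + 1) * x⁻¹ - 2 := by
  have h := Real.one_sub_inv_le_log_of_pos hx
  have : (x + 1) * x⁻¹ = 1 + x⁻¹ := by field_simp
  rw [this]; linarith

private lemma k_nonneg {x : ℝ} (hx : 1 ≤ x) :
    0 ≤ (x + 1) * Real.log x - 2 * (x - 1) := by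
  have hmono : MonotoneOn (fun t : ℝ => (t + 1) * Real.log t - 2 * (t - 1)) (Set.Ici 1) := by
    apply monotoneOn_of_hasDerivWithinAt_nonneg (convex_Ici 1)
      (f' := fun t => Real.log t + (t + 1) * t⁻¹ - 2)
    · apply ContinuousOn.sub (ContinuousOn.mul (by fun_prop) ?_) (by fun_prop)
      exact Real.continuousOn_log.mono (by intro y hy; simp at hy ⊢; linarith)
    · intro t ht
      rw [interior_Ici] at ht
      exact (k_hasDeriv (by linarith [ht.out])).hasDerivWithinAt
    · intro t ht
      rw [interior_Ici] at ht
      exact k_deriv_nonneg (by linarith [ht.out])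
  have := hmono (Set.self_mem_Ici) hx hx
  simpa using this

private lemma k_nonpos {x : ℝ} (hx0 : 0 < x) (hx : x ≤ 1) :
    (x + 1) * Real.log x - 2 * (x - 1) ≤ 0 := by
  have hmono : MonotoneOn (fun t : ℝ => (t + 1) * Real.log t - 2 * (t - 1)) (Set.Icc x 1) := by
    apply monotoneOn_of_hasDerivWithinAt_nonneg (convex_Icc x 1)
      (f' := fun t => Real.log t + (t + 1) * t⁻¹ - 2)
    · apply ContinuousOn.sub (ContinuousOn.mul (by fun_prop) ?_) (by fun_prop)
      exact Real.continuousOn_log.mono (by intro y hy; simp at hy ⊢; intro h; rw [h] at hy; linarith [hy.1])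
    · intro t ht
      rw [interior_Icc] at ht
      exact (k_hasDeriv (lt_trans hx0 ht.1)).hasDerivWithinAt
    · intro t ht
      rw [interior_Icc] at ht
      exact k_deriv_nonneg (lt_trans hx0 ht.1)
  have := hmono (Set.left_mem_Icc.2 hx) (Set.right_mem_Icc.2 hx) hx
  simpa using this

private lemma h_hasDeriv {x : ℝ} (hx : 0 < x) :
    HasDerivAt (fun t : ℝ => 2 * (t + 2) * (t * Real.log t - t + 1) - 3 * (t - 1) ^ 2)
      (4 * ((x + 1) * Real.log x - 2 * (x - 1))) x := by
  have h1 : HasDerivAt (fun t : ℝ => 2 * (t + 2)) 2 x := by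
    simpa using ((hasDerivAt_id x).add_const 2).const_mul 2
  have h2 : HasDerivAt (fun t : ℝ => t * Real.log t - t + 1) (Real.log x) x := by
    simpa using ((Real.hasDerivAt_mul_log hx.ne').sub (hasDerivAt_id x)).add_const 1
  have h3 := h1.mul h2
  have h4 : HasDerivAt (fun t : ℝ => 3 * (t - 1) ^ 2) (3 * (2 * (x - 1))) x := by
    simpa using (((hasDerivAt_id x).sub_const 1).pow 2).const_mul 3
  have h5 := h3.sub h4
  exact h5.congr_deriv (by ring)

/-- Pointwise Pinsker: `3(t-1)^2 ≤ 2(t+2)(t log t - t + 1)` for `t ≥ 0`. -/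
private lemma factC {t : ℝ} (ht : 0 ≤ t) :
    3 * (t - 1) ^ 2 ≤ 2 * (t + 2) * (t * Real.log t - t + 1) := by
  set h : ℝ → ℝ := fun t => 2 * (t + 2) * (t * Real.log t - t + 1) - 3 * (t - 1) ^ 2 with hh
  have key : 0 ≤ h t := by
    rcases eq_or_lt_of_le ht with h0 | htpos
    · simp [hh, ← h0]; norm_num
    · have hcont : Continuous h := by
        apply Continuous.sub _ (by fun_prop)
        exact (continuous_const.mul (continuous_id.add continuous_const)).mul
          ((Real.continuous_mul_log.sub continuous_id).add continuous_const)
      have h1 : h 1 = 0 := by simp [hh]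
      rcases le_or_gt 1 t with h1t | ht1
      · have hmono : MonotoneOn h (Set.Icc 1 t) := by
          apply monotoneOn_of_hasDerivWithinAt_nonneg (convex_Icc 1 t) hcont.continuousOn
            (f' := fun s => 4 * ((s + 1) * Real.log s - 2 * (s - 1)))
          · intro s hs
            rw [interior_Icc] at hs
            exact (h_hasDeriv (by linarith [hs.1])).hasDerivWithinAt
          · intro s hs
            rw [interior_Icc] at hs
            have := k_nonneg (le_of_lt hs.1)
            linarith
        have := hmono (Set.left_mem_Icc.2 h1t) (Set.right_mem_Icc.2 h1t) h1t
        rw [h1] at this; exact this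
      · have hmono : AntitoneOn h (Set.Icc t 1) := by
          apply antitoneOn_of_hasDerivWithinAt_nonpos (convex_Icc t 1) hcont.continuousOn
            (f' := fun s => 4 * ((s + 1) * Real.log s - 2 * (s - 1)))
          · intro s hs
            rw [interior_Icc] at hs
            exact (h_hasDeriv (lt_trans htpos hs.1)).hasDerivWithinAt
          · intro s hs
            rw [interior_Icc] at hs
            have := k_nonpos (lt_trans htpos hs.1) (le_of_lt hs.2)
            linarith
        have := hmono (Set.left_mem_Icc.2 ht1.le) (Set.right_mem_Icc.2 ht1.le) ht1.le
        rw [h1] at this; exact this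
  simp only [hh] at key
  linarith

private lemma pinsker_pointwise' {t b : ℝ} (ht : 0 ≤ t) :
    3 * (t * b - b) ^ 2 ≤ 2 * (t * b + 2 * b) * (t * b * Real.log t - t * b + b) := by
  have h := mul_le_mul_of_nonneg_right (factC ht) (sq_nonneg b)
  calc 3 * (t * b - b) ^ 2 = 3 * (t - 1) ^ 2 * b ^ 2 := by ring
    _ ≤ 2 * (t + 2) * (t * Real.log t - t + 1) * b ^ 2 := h
    _ = 2 * (t * b + 2 * b) * (t * b * Real.log t - t * b + b) := by ring

private lemma pinsker_pointwise {a b : ℝ} (ha : 0 ≤ a) (hb : 0 < b) :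
    3 * (a - b) ^ 2 ≤ 2 * (a + 2 * b) * (a * Real.log (a / b) - a + b) := by
  have ht : 0 ≤ a / b := div_nonneg ha hb.le
  have hab : a / b * b = a := div_mul_cancel₀ a hb.ne'
  have key := pinsker_pointwise' (b := b) ht
  rw [hab] at key
  exact key

private lemma phi_nonneg {a b : ℝ} (ha : 0 ≤ a) (hb : 0 < b) :
    0 ≤ a * Real.log (a / b) - a + b := by
  have h := pinsker_pointwise ha hb
  nlinarith [sq_nonneg (a - b)]

private lemma abs_eq_add_two_max (a : ℝ) : |a| = a + 2 * max (-a) 0 := by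
  rcases le_total 0 a with h | h
  · rw [abs_of_nonneg h, max_eq_right (neg_nonpos.2 h)]; ring
  · rw [abs_of_nonpos h, max_eq_left (neg_nonneg.2 h)]; ring

private lemma factB {a b : ℝ} (ha : 0 ≤ a) (hb : 0 ≤ b) :
    a * max (-(Real.log (a / b))) 0 ≤ max (b - a) 0 := by
  rcases eq_or_lt_of_le ha with h0 | hapos
  · simp [← h0]
  rcases eq_or_lt_of_le hb with g0 | hbpos
  · simp [← g0]
  have hlog : -(Real.log (a / b)) = Real.log (b / a) := by
    rw [← Real.log_inv, inv_div]
  rw [hlog]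
  rcases le_or_gt b a with hle | hlt
  · have : Real.log (b / a) ≤ 0 :=
      Real.log_nonpos (div_nonneg hb ha) ((div_le_one hapos).2 hle)
    rw [max_eq_right this]
    simp [le_max_right]
  · have h1 : Real.log (b / a) ≤ b / a - 1 :=
      Real.log_le_sub_one_of_pos (div_pos hbpos hapos)
    have h2 : 0 ≤ Real.log (b / a) := Real.log_nonneg ((one_le_div hapos).2 hlt.le)
    rw [max_eq_left h2]
    have : a * (b / a - 1) = b - a := by field_simp
    calc a * Real.log (b / a) ≤ a * (b / a - 1) :=
          mul_le_mul_of_nonneg_left h1 ha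
      _ = b - a := this
      _ ≤ max (b - a) 0 := le_max_left _ _

private lemma pinsker_integral (f g : ℝ → ℝ) (hf0 : ∀ x, 0 ≤ f x) (hg0 : ∀ x, 0 ≤ g x)
    (hfm : Measurable f) (hgm : Measurable g)
    (hfint : ∫ x, f x = 1) (hgint : ∫ x, g x = 1)
    (hfInt : Integrable f) (hgInt : Integrable g)
    (hac : ∀ᵐ x ∂(volume : Measure ℝ), g x = 0 → f x = 0)
    (hint : Integrable (fun x => f x * Real.log (f x / g x))) :
    ∫ x, |f x - g x| ≤ Real.sqrt (2 * ∫ x, f x * Real.log (f x / g x)) := by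
  have hLm : Measurable fun x => Real.log (f x / g x) :=
    Real.measurable_log.comp (hfm.div hgm)
  set φ : ℝ → ℝ := fun x => f x * Real.log (f x / g x) - f x + g x with hφ
  have hφInt : Integrable φ := (hint.sub hfInt).add hgInt
  have hφm : Measurable φ := ((hfm.mul hLm).sub hfm).add hgm
  have hφ0 : ∀ᵐ x ∂(volume : Measure ℝ), 0 ≤ φ x := by
    filter_upwards [hac] with x hx
    rcases eq_or_lt_of_le (hg0 x) with g0 | hgpos
    · have hf0x := hx g0.symm
      simp [hφ, hf0x, ← g0]
    · exact phi_nonneg (hf0 x) hgpos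
  set A : ℝ → ℝ := fun x => Real.sqrt ((f x + 2 * g x) / 3) with hA
  set B : ℝ → ℝ := fun x => Real.sqrt (2 * φ x) with hB
  have hAm : Measurable A :=
    Real.continuous_sqrt.measurable.comp ((hfm.add (hgm.const_mul 2)).div_const 3)
  have hBm : Measurable B :=
    Real.continuous_sqrt.measurable.comp (hφm.const_mul 2)
  have hA2 : ∀ x, A x ^ 2 = (f x + 2 * g x) / 3 := fun x =>
    Real.sq_sqrt (by have := hf0 x; have := hg0 x; positivity)
  have hA2Int : Integrable (fun x => A x ^ 2) :=
    ((hfInt.add (hgInt.const_mul 2)).div_const 3).congr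
      (ae_of_all _ fun x => (hA2 x).symm)
  have hMemA : MemLp A 2 := (memLp_two_iff_integrable_sq hAm.aestronglyMeasurable).2 hA2Int
  have hB2 : ∀ᵐ x ∂(volume : Measure ℝ), B x ^ 2 = 2 * φ x := by
    filter_upwards [hφ0] with x hx
    exact Real.sq_sqrt (by linarith)
  have hB2Int : Integrable (fun x => B x ^ 2) :=
    (hφInt.const_mul 2).congr (by filter_upwards [hB2] with x hx; exact hx.symm)
  have hMemB : MemLp B 2 := (memLp_two_iff_integrable_sq hBm.aestronglyMeasurable).2 hB2Int
  have hABle : ∀ᵐ x ∂(volume : Measure ℝ), |f x - g x| ≤ A x * B x := by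
    filter_upwards [hac] with x hx
    rcases eq_or_lt_of_le (hg0 x) with g0 | hgpos
    · have hf0x := hx g0.symm
      have : |f x - g x| = 0 := by rw [hf0x, ← g0]; simp
      rw [this]
      exact mul_nonneg (Real.sqrt_nonneg _) (Real.sqrt_nonneg _)
    · have key := pinsker_pointwise (hf0 x) hgpos
      calc |f x - g x| = Real.sqrt ((f x - g x) ^ 2) := (Real.sqrt_sq_eq_abs _).symm
        _ ≤ Real.sqrt ((f x + 2 * g x) / 3 * (2 * φ x)) := by
            apply Real.sqrt_le_sqrt
            simp only [hφ]
            nlinarith [key]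
        _ = A x * B x := Real.sqrt_mul (by have := hf0 x; have := hg0 x; positivity) _
  have hABInt : Integrable (fun x => A x * B x) := by
    have h1 : (1 : ℝ≥0∞) / 1 = 1 / 2 + 1 / 2 := by
      rw [ENNReal.div_add_div_same, one_div_one]
      norm_num
      exact (ENNReal.div_self (by norm_num) (by norm_num)).symm
    have := memLp_one_iff_integrable.1 (hMemB.smul hMemA)
    exact this
  have step1 : ∫ x, |f x - g x| ≤ ∫ x, A x * B x :=
    integral_mono_ae (hfInt.sub hgInt).abs hABInt hABle
  have hpq : Real.HolderConjugate 2 2 := Real.holderConjugate_iff.2 ⟨one_lt_two, by norm_num⟩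
  have hof : ENNReal.ofReal (2 : ℝ) = 2 := by
    rw [ENNReal.ofReal_ofNat]
  have step2 : ∫ x, A x * B x
      ≤ (∫ x, A x ^ (2 : ℝ)) ^ ((1 : ℝ) / 2) * (∫ x, B x ^ (2 : ℝ)) ^ ((1 : ℝ) / 2) := by
    refine integral_mul_le_Lp_mul_Lq_of_nonneg hpq
      (ae_of_all _ fun x => Real.sqrt_nonneg _) (ae_of_all _ fun x => Real.sqrt_nonneg _)
      ?_ ?_
    · rw [hof]; exact hMemA
    · rw [hof]; exact hMemB
  have hrpow : ∀ h : ℝ → ℝ, (fun x => h x ^ (2 : ℝ)) = fun x => h x ^ 2 := fun h =>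
    funext fun x => by rw [show (2 : ℝ) = ((2 : ℕ) : ℝ) by norm_num, Real.rpow_natCast]
  rw [hrpow A, hrpow B] at step2
  have hs1 : ∫ x, A x ^ 2 = 1 := by
    rw [integral_congr_ae (ae_of_all _ hA2)]
    rw [integral_div, integral_add hfInt (hgInt.const_mul 2), integral_const_mul 2 _, hfint, hgint]
    norm_num
  have hs2 : ∫ x, B x ^ 2 = 2 * ∫ x, f x * Real.log (f x / g x) := by
    rw [integral_congr_ae hB2, integral_const_mul 2 _]
    have : ∫ x, φ x = ∫ x, f x * Real.log (f x / g x) := by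
      simp only [hφ]
      have hsub : Integrable (fun x => f x * Real.log (f x / g x) - f x) := hint.sub hfInt
      have e1 : ∫ x, (f x * Real.log (f x / g x) - f x + g x)
          = (∫ x, (f x * Real.log (f x / g x) - f x)) + ∫ x, g x := integral_add hsub hgInt
      have e2 : ∫ x, (f x * Real.log (f x / g x) - f x)
          = (∫ x, f x * Real.log (f x / g x)) - ∫ x, f x := integral_sub hint hfInt
      rw [e1, e2, hfint, hgint]; ring
    rw [this]
  rw [hs1, hs2] at step2
  rw [Real.one_rpow, one_mul] at step2
  rw [Real.sqrt_eq_rpow]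
  exact step1.trans step2

/-- `∫ f |log(f/g)| ≤ D(f‖g) + √(2 D(f‖g))` for probability densities `f, g`. -/
theorem integral_abs_log_ratio_le (f g : ℝ → ℝ) (hf0 : ∀ x, 0 ≤ f x) (hg0 : ∀ x, 0 ≤ g x)
    (hfm : Measurable f) (hgm : Measurable g)
    (hfint : ∫ x, f x = 1) (hgint : ∫ x, g x = 1)
    (hac : ∀ᵐ x ∂(volume : Measure ℝ), g x = 0 → f x = 0)
    (hint : Integrable (fun x => f x * Real.log (f x / g x))) :
    ∫ x, f x * |Real.log (f x / g x)|
      ≤ (∫ x, f x * Real.log (f x / g x))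
        + Real.sqrt (2 * ∫ x, f x * Real.log (f x / g x)) := by
  have hfInt : Integrable f := by
    by_contra h
    rw [integral_undef h] at hfint; norm_num at hfint
  have hgInt : Integrable g := by
    by_contra h
    rw [integral_undef h] at hgint; norm_num at hgint
  have hLm : Measurable fun x => Real.log (f x / g x) :=
    Real.measurable_log.comp (hfm.div hgm)
  set n : ℝ → ℝ := fun x => f x * max (-(Real.log (f x / g x))) 0 with hn
  have hn_nonneg : ∀ x, 0 ≤ n x := fun x => mul_nonneg (hf0 x) (le_max_right _ _)
  have hn_le : ∀ x, n x ≤ max (g x - f x) 0 := fun x => factB (hf0 x) (hg0 x)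
  have hnm : Measurable n := hfm.mul (hLm.neg.max measurable_const)
  have hnInt : Integrable n := by
    refine Integrable.mono' hgInt hnm.aestronglyMeasurable (ae_of_all _ fun x => ?_)
    rw [Real.norm_of_nonneg (hn_nonneg x)]
    exact (hn_le x).trans (max_le (by linarith [hf0 x]) (hg0 x))
  have hsplit : ∫ x, f x * |Real.log (f x / g x)|
      = (∫ x, f x * Real.log (f x / g x)) + 2 * ∫ x, n x := by
    have he : (fun x => f x * |Real.log (f x / g x)|)
        = fun x => f x * Real.log (f x / g x) + 2 * n x := by
      funext x
      rw [abs_eq_add_two_max (Real.log (f x / g x))]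
      simp only [hn]
      ring
    rw [he, integral_add hint ((hnInt).const_mul 2), integral_const_mul 2 _]
  rw [hsplit]
  have main : 2 * ∫ x, n x ≤ Real.sqrt (2 * ∫ x, f x * Real.log (f x / g x)) := by
    have hgfInt : Integrable (fun x => g x - f x) := hgInt.sub hfInt
    have hmaxInt : Integrable (fun x => max (g x - f x) 0) := hgfInt.pos_part
    have step1 : ∫ x, n x ≤ ∫ x, max (g x - f x) 0 :=
      integral_mono_ae hnInt hmaxInt (ae_of_all _ hn_le)
    have emax : ∫ x, max (g x - f x) 0 = (∫ x, |f x - g x|) / 2 := by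
      have he : (fun x => max (g x - f x) 0)
          = fun x => ((g x - f x) + |g x - f x|) / 2 := by
        funext x
        rcases le_total 0 (g x - f x) with h | h
        · rw [max_eq_left h, abs_of_nonneg h]; ring
        · rw [max_eq_right h, abs_of_nonpos h]; ring
      have habs : (fun x => |g x - f x|) = fun x => |f x - g x| := by
        funext x; rw [abs_sub_comm]
      rw [he]
      rw [integral_div, integral_add hgfInt hgfInt.abs]
      rw [integral_sub hgInt hfInt, hfint, hgint]
      rw [habs]
      ring
    have step2 := pinsker_integral f g hf0 hg0 hfm hgm hfint hgint hfInt hgInt hac hint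
    calc 2 * ∫ x, n x ≤ 2 * ∫ x, max (g x - f x) 0 := by linarith
      _ = ∫ x, |f x - g x| := by rw [emax]; ring
      _ ≤ Real.sqrt (2 * ∫ x, f x * Real.log (f x / g x)) := step2
  linarith
end

section
/- Let f : ℝ → ℝ₊ be a log-concave integrable function with barycenter μ = (∫ x f dx)/(∫ f dx), and set μ₊ = max(μ,0). Then for every x ≥ x₀ ≥ 3(∫ f)/f(μ) + μ₊, one has f(x) ≤ f(x₀) · 2^{−(x−μ)/(x₀−μ) + 1}. -/
open MeasureTheory ProbabilityTheory Real
open scoped ENNReal NNReal Classical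

/-- A nonnegative function is log-concave if `f(ax+by) ≥ f(x)^a f(y)^b` whenever
`a, b ≥ 0` and `a + b = 1`. -/
def LogConcave (f : ℝ → ℝ) : Prop :=
  ∀ x y a b : ℝ, 0 ≤ a → 0 ≤ b → a + b = 1 → f x ^ a * f y ^ b ≤ f (a * x + b * y)

/-- Tail bound for a log-concave integrable function:
`f(x) ≤ f(x₀) 2^{-(x-μ)/(x₀-μ)+1}` for `x ≥ x₀ ≥ 3∫f/f(μ) + μ₊`. -/
theorem logConcave_tail_bound (f : ℝ → ℝ) (hf0 : ∀ x, 0 ≤ f x)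
    (hfi : Integrable f) (hpos : 0 < ∫ x, f x)
    (hxf : Integrable (fun x => x * f x)) (hlc : LogConcave f)
    (μ : ℝ) (hμ : μ = (∫ x, x * f x) / ∫ x, f x) (hfμ : 0 < f μ)
    (x x₀ : ℝ) (hx₀ : 3 * (∫ x, f x) / f μ + max μ 0 ≤ x₀) (hx : x₀ ≤ x) :
    f x ≤ f x₀ * (2 : ℝ) ^ (-(x - μ) / (x₀ - μ) + 1) := by
  set I := ∫ x, f x with hI
  have hμmax : μ ≤ max μ 0 := le_max_left _ _
  have hIpos : 0 < 3 * I / f μ := by positivity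
  have hx₀μ : 3 * I / f μ ≤ x₀ - μ := by linarith
  have hx₀μ' : 0 < x₀ - μ := lt_of_lt_of_le hIpos hx₀μ
  -- Step 1: f x₀ ≤ f μ / 2
  have hB2 : f x₀ ≤ f μ / 2 := by
    by_contra hcon
    push_neg at hcon
    have hlow : ∀ y ∈ Set.Icc μ x₀, f μ / 2 ≤ f y := by
      intro y hy
      obtain ⟨hy1, hy2⟩ := hy
      set b := (y - μ) / (x₀ - μ) with hb
      have hb0 : 0 ≤ b := div_nonneg (by linarith) hx₀μ'.le
      have hb1 : b ≤ 1 := by rw [div_le_one hx₀μ']; linarith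
      have h1 := hlc μ x₀ (1 - b) b (by linarith) hb0 (by ring)
      have hy' : (1 - b) * μ + b * x₀ = y := by
        field_simp [hb]
        rw [hb]
        linear_combination (div_mul_cancel₀ (y - μ) hx₀μ'.ne')
      rw [hy'] at h1
      have h2a : (f μ / 2) ^ (1 - b) ≤ f μ ^ (1 - b) :=
        Real.rpow_le_rpow (by positivity) (by linarith) (by linarith)
      have h2b : (f μ / 2) ^ b ≤ f x₀ ^ b :=
        Real.rpow_le_rpow (by positivity) hcon.le hb0
      have h2 : (f μ / 2) ^ (1 - b) * (f μ / 2) ^ b ≤ f μ ^ (1 - b) * f x₀ ^ b :=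
        mul_le_mul h2a h2b (by positivity) (Real.rpow_nonneg hfμ.le _)
      have h3 : (f μ / 2) ^ (1 - b) * (f μ / 2) ^ b = f μ / 2 := by
        rw [← Real.rpow_add (by positivity)]
        norm_num
      linarith [h2.trans h1, h3 ▸ h2.trans h1]
    have hconst : IntegrableOn (fun _ : ℝ => f μ / 2) (Set.Icc μ x₀) := by
      exact integrableOn_const (by rw [Real.volume_Icc]; exact ENNReal.ofReal_ne_top) (by simp)
    have hmono : ∫ y in Set.Icc μ x₀, (f μ / 2) ≤ ∫ y in Set.Icc μ x₀, f y :=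
      setIntegral_mono_on hconst hfi.integrableOn measurableSet_Icc hlow
    rw [setIntegral_const, measureReal_def, Real.volume_Icc, ENNReal.toReal_ofReal hx₀μ'.le,
      smul_eq_mul] at hmono
    have hle : ∫ y in Set.Icc μ x₀, f y ≤ I :=
      setIntegral_le_integral hfi (Filter.Eventually.of_forall hf0)
    have hkey : 3 * I / f μ * (f μ / 2) ≤ I := by
      calc 3 * I / f μ * (f μ / 2) ≤ (x₀ - μ) * (f μ / 2) := by
            apply mul_le_mul_of_nonneg_right hx₀μ (by positivity)
        _ ≤ I := hmono.trans hle
    have : 3 * I / f μ * (f μ / 2) = 3 * I / 2 := by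
      field_simp
    linarith [this ▸ hkey]
  -- Step 2: main bound
  set t := (x - μ) / (x₀ - μ) with ht
  have ht1 : 1 ≤ t := by rw [le_div_iff₀ hx₀μ']; linarith
  have htpos : 0 < t := lt_of_lt_of_le one_pos ht1
  have hexp : -(x - μ) / (x₀ - μ) + 1 = 1 - t := by rw [ht]; ring
  rw [hexp]
  have hxμ : 0 < x - μ := lt_of_lt_of_le hx₀μ' (by linarith)
  have hx₀eq : (1/t) * x + (1 - 1/t) * μ = x₀ := by
    rw [ht]
    field_simp [hxμ.ne']
    ring
  have hkey := hlc x μ (1/t) (1 - 1/t) (by positivity)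
    (by rw [sub_nonneg, div_le_one htpos]; exact ht1) (by ring)
  rw [hx₀eq] at hkey
  rcases eq_or_lt_of_le (hf0 x) with hA | hA
  · rw [← hA]
    exact mul_nonneg (hf0 x₀) (Real.rpow_nonneg (by norm_num) _)
  · have hBpos : 0 < f x₀ := lt_of_lt_of_le (by positivity) hkey
    have h1 : f x ^ (1/t) ≤ f x₀ / f μ ^ (1 - 1/t) :=
      (le_div_iff₀ (Real.rpow_pos_of_pos hfμ _)).mpr hkey
    have h2 : (f x ^ (1/t)) ^ t ≤ (f x₀ / f μ ^ (1 - 1/t)) ^ t :=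
      Real.rpow_le_rpow (Real.rpow_nonneg hA.le _) h1 htpos.le
    rw [← Real.rpow_mul hA.le, one_div_mul_cancel htpos.ne', Real.rpow_one,
      Real.div_rpow (hf0 x₀) (Real.rpow_nonneg hfμ.le _),
      ← Real.rpow_mul hfμ.le] at h2
    have he1 : (1 - 1/t) * t = t - 1 := by field_simp
    rw [he1] at h2
    have h3 : f x₀ ^ t ≤ f x₀ * (f μ ^ (t-1) / 2 ^ (t-1)) := by
      have heq : f x₀ ^ t = f x₀ * f x₀ ^ (t - 1) := by
        rw [show t = 1 + (t-1) by ring,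
          Real.rpow_one_add' hBpos.le (by rw [show (1:ℝ)+(t-1)=t by ring]; exact htpos.ne')]
        norm_num
      rw [heq, ← Real.div_rpow hfμ.le (by norm_num : (0:ℝ) ≤ 2)]
      exact mul_le_mul_of_nonneg_left
        (Real.rpow_le_rpow (hf0 x₀) hB2 (by linarith)) hBpos.le
    have h4 : f x ≤ f x₀ * (f μ ^ (t-1) / 2 ^ (t-1)) / f μ ^ (t-1) := by
      calc f x ≤ f x₀ ^ t / f μ ^ (t-1) := h2
        _ ≤ f x₀ * (f μ ^ (t-1) / 2 ^ (t-1)) / f μ ^ (t-1) := by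
            gcongr
    have h5 : f x₀ * (f μ ^ (t-1) / 2 ^ (t-1)) / f μ ^ (t-1) = f x₀ * 2 ^ (1-t) := by
      have hC : (0:ℝ) < f μ ^ (t-1) := Real.rpow_pos_of_pos hfμ _
      have h2p : (0:ℝ) < (2:ℝ) ^ (t-1) := Real.rpow_pos_of_pos (by norm_num) _
      rw [show (1 - t : ℝ) = -(t-1) by ring, Real.rpow_neg (by norm_num : (0:ℝ) ≤ 2)]
      field_simp
    rw [h5] at h4
    exact h4
end

section
/- Let f : ℝ → ℝ₊ be a log-concave integrable function with barycenter μ and a mode x_max ≥ μ. Then ∫_ℝ f ≥ f(μ)(x_max − μ); consequently, if x₀ ≥ 3(∫ f)/f(μ) + μ₊ then f(x₀) ≤ f(μ)/2. -/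
open MeasureTheory ProbabilityTheory Real
open scoped ENNReal NNReal Classical

lemma logConcave_min_le (f : ℝ → ℝ) (hf0 : ∀ x, 0 ≤ f x) (hlc : LogConcave f)
    {x y t : ℝ} (hxt : x ≤ t) (hty : t ≤ y) : min (f x) (f y) ≤ f t := by
  rcases eq_or_lt_of_le (hxt.trans hty) with h | h
  · have : t = x := le_antisymm (h ▸ hty) hxt
    subst this; exact min_le_left _ _
  · have hyx : 0 < y - x := by linarith
    have hne : y - x ≠ 0 := hyx.ne'
    set a := (y - t) / (y - x) with ha_def
    set b := (t - x) / (y - x) with hb_def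
    have ha : 0 ≤ a := div_nonneg (by linarith) hyx.le
    have hb : 0 ≤ b := div_nonneg (by linarith) hyx.le
    have hab : a + b = 1 := by
      rw [ha_def, hb_def, ← add_div, show y - t + (t - x) = y - x by ring]
      exact div_self hne
    have ht : a * x + b * y = t := by
      rw [ha_def, hb_def]; field_simp; ring
    have h1 := hlc x y a b ha hb hab
    rw [ht] at h1
    refine le_trans ?_ h1
    set m := min (f x) (f y)
    have hm : 0 ≤ m := le_min (hf0 x) (hf0 y)
    calc m = m ^ (a + b) := by rw [hab, Real.rpow_one]
    _ = m ^ a * m ^ b := Real.rpow_add' hm (by rw [hab]; norm_num)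
    _ ≤ f x ^ a * f y ^ b :=
        mul_le_mul (Real.rpow_le_rpow hm (min_le_left _ _) ha)
          (Real.rpow_le_rpow hm (min_le_right _ _) hb)
          (Real.rpow_nonneg hm b) (Real.rpow_nonneg (hf0 x) a)

lemma const_mul_le_integral (f : ℝ → ℝ) (hf0 : ∀ x, 0 ≤ f x) (hfi : Integrable f)
    {a b c : ℝ} (hab : a ≤ b) (hc : ∀ t ∈ Set.Icc a b, c ≤ f t) :
    c * (b - a) ≤ ∫ x, f x := by
  have h1 : c * (b - a) ≤ ∫ x in Set.Icc a b, f x := by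
    have := MeasureTheory.setIntegral_ge_of_const_le (measurableSet_Icc)
      (measure_Icc_lt_top.ne) hc (hfi.integrableOn)
    simpa [Real.volume_Icc, ENNReal.toReal_ofReal (by linarith : (0:ℝ) ≤ b - a), max_eq_left (sub_nonneg.mpr hab), mul_comm] using this
  exact h1.trans (setIntegral_le_integral hfi (Filter.Eventually.of_forall hf0))

/-- For log-concave integrable `f` with mode `x_max ≥ μ`:
`∫ f ≥ f(μ)(x_max - μ)`, and `f(x₀) ≤ f(μ)/2` whenever `x₀ ≥ 3∫f/f(μ) + μ₊`. -/
theorem logConcave_mode_bound (f : ℝ → ℝ) (hf0 : ∀ x, 0 ≤ f x)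
    (hfi : Integrable f) (hpos : 0 < ∫ x, f x)
    (hxf : Integrable (fun x => x * f x)) (hlc : LogConcave f)
    (μ : ℝ) (hμ : μ = (∫ x, x * f x) / ∫ x, f x) (hfμ : 0 < f μ)
    (xmax : ℝ) (hmode : ∀ x, f x ≤ f xmax) (hxmaxμ : μ ≤ xmax) :
    f μ * (xmax - μ) ≤ ∫ x, f x ∧
    ∀ x₀ : ℝ, 3 * (∫ x, f x) / f μ + max μ 0 ≤ x₀ → f x₀ ≤ f μ / 2 := by
  constructor
  · have key : ∀ t ∈ Set.Icc μ xmax, f μ ≤ f t := fun t ht => by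
      have h1 := logConcave_min_le f hf0 hlc ht.1 ht.2
      rwa [min_eq_left (hmode μ)] at h1
    exact const_mul_le_integral f hf0 hfi hxmaxμ key
  · intro x₀ hx₀
    by_contra h
    push_neg at h
    set I := ∫ x, f x with hI_def
    have hI : 0 < I := hpos
    have h3 : 0 < 3 * I / f μ := by positivity
    have hmx := le_max_left μ (0:ℝ)
    have hμx₀ : μ ≤ x₀ := by linarith
    have key : ∀ t ∈ Set.Icc μ x₀, f μ / 2 ≤ f t := fun t ht => by
      have h1 := logConcave_min_le f hf0 hlc ht.1 ht.2
      have h2 : f μ / 2 ≤ min (f μ) (f x₀) := le_min (by linarith) h.le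
      linarith
    have h2 := const_mul_le_integral f hf0 hfi hμx₀ key
    have h4 : 3 * I / f μ ≤ x₀ - μ := by linarith
    have h5 : f μ / 2 * (3 * I / f μ) ≤ f μ / 2 * (x₀ - μ) :=
      mul_le_mul_of_nonneg_left h4 (by positivity)
    rw [show f μ / 2 * (3 * I / f μ) = 3 / 2 * I by field_simp] at h5
    linarith
end
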